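/- arXiv:2602.02083 — 7 statements merged into one kernel-verified Lean document; each statement's English description precedes it below -/
import Mathlib

section
/- Let k be a client with observed index set obs(k) ⊆ {1,…,d} and mis(k) its complement, and assume Σ and Σ_{obs(k)} are invertible. Then the minimal risk over linear predictors from X_{obs(k)} satisfies min_{θ ∈ ℝ^{|obs(k)|}} E[(Y − θ^⊤ X_{obs(k)})²] = σ² + ‖(θ_*)_{mis(k)}‖²_{V_k}, where V_k := Σ_{mis(k)} − Σ_{mis(k),obs(k)} Σ_{obs(k)}^{-1} Σ_{obs(k),mis(k)} is the Schur complement of Σ_{obs(k)} in Σ. -/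
open MeasureTheory Matrix

/-- Product of two `L²` functions is integrable. -/
lemma l2_mul_integrable {Ω : Type*} [MeasurableSpace Ω] {μ : Measure Ω} {f g : Ω → ℝ}
    (hf : MemLp f 2 μ) (hg : MemLp g 2 μ) :
    Integrable (fun ω => f ω * g ω) μ := by
  have h := hg.smul (𝕜 := ℝ) hf (r := 1)
  rw [memLp_one_iff_integrable] at h
  exact h

/-- Swap a bilinear dot product across a matrix. -/
lemma dot_mulVec_comm {p q : Type*} [Fintype p] [Fintype q]
    (B : Matrix p q ℝ) (u : p → ℝ) (v : q → ℝ) :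
    u ⬝ᵥ (B *ᵥ v) = v ⬝ᵥ (Bᵀ *ᵥ u) := by
  simp only [dotProduct, mulVec, Matrix.transpose_apply, Finset.mul_sum]
  rw [Finset.sum_comm]
  exact Finset.sum_congr rfl fun j _ => Finset.sum_congr rfl fun i _ => by ring

/-- the minimal risk over linear predictors from `X_{obs}` equals
`σ² + ‖(θ_*)_mis‖²_{V}` where `V` is the Schur complement of `Σ_obs` in `Σ`. -/
theorem stmt1
    {Ω : Type*} [MeasurableSpace Ω] (μ : Measure Ω) [IsProbabilityMeasure μ]
    {d : ℕ} (X : Ω → Fin d → ℝ) (Y : Ω → ℝ)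
    (hXmeas : ∀ j, Measurable fun ω => X ω j) (hYmeas : Measurable Y)
    (hX : ∀ j, MemLp (fun ω => X ω j) 2 μ) (hY : MemLp Y 2 μ)
    (Sig : Matrix (Fin d) (Fin d) ℝ)
    (hSig : ∀ l j, Sig l j = ∫ ω, X ω l * X ω j ∂μ)
    (gam : Fin d → ℝ) (hgam : ∀ j, gam j = ∫ ω, X ω j * Y ω ∂μ)
    (obs : Finset (Fin d))
    (hSigInv : IsUnit Sig.det)
    (hSobsInv : IsUnit (Sig.submatrix (Subtype.val : ↥obs → Fin d)
      (Subtype.val : ↥obs → Fin d)).det)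
    (θstar : Fin d → ℝ) (hθstar : θstar = Sig⁻¹ *ᵥ gam)
    -- noise variance σ² = E[ε²] with ε = Y - X⊤θ*
    (σ2 : ℝ) (hσ2 : σ2 = ∫ ω, (Y ω - ∑ j, θstar j * X ω j) ^ 2 ∂μ)
    -- Schur complement V = Σ_mis - Σ_{mis,obs} Σ_obs⁻¹ Σ_{obs,mis}
    (V : Matrix ↥(obsᶜ) ↥(obsᶜ) ℝ)
    (hV : V = Sig.submatrix (Subtype.val : ↥(obsᶜ) → Fin d) (Subtype.val : ↥(obsᶜ) → Fin d)
      - Sig.submatrix (Subtype.val : ↥(obsᶜ) → Fin d) (Subtype.val : ↥obs → Fin d)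
        * (Sig.submatrix (Subtype.val : ↥obs → Fin d) (Subtype.val : ↥obs → Fin d))⁻¹
        * Sig.submatrix (Subtype.val : ↥obs → Fin d) (Subtype.val : ↥(obsᶜ) → Fin d)) :
    (⨅ θ : ↥obs → ℝ, ∫ ω, (Y ω - ∑ j : ↥obs, θ j * X ω j) ^ 2 ∂μ)
      = σ2 + (fun j : ↥(obsᶜ) => θstar j) ⬝ᵥ (V *ᵥ fun j : ↥(obsᶜ) => θstar j) := by
  classical
  -- Basic integrability facts
  have hYY : Integrable (fun ω => Y ω ^ 2) μ := hY.integrable_sq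
  have hYX : ∀ j, Integrable (fun ω => Y ω * X ω j) μ := fun j => l2_mul_integrable hY (hX j)
  have hXX : ∀ l j, Integrable (fun ω => X ω l * X ω j) μ :=
    fun l j => l2_mul_integrable (hX l) (hX j)
  set c : ℝ := ∫ ω, Y ω ^ 2 ∂μ with hc
  -- quadratic form equals the integral of the square of the linear combination
  have hquadInt : ∀ t : Fin d → ℝ,
      t ⬝ᵥ (Sig *ᵥ t) = ∫ ω, (∑ j, t j * X ω j) ^ 2 ∂μ := by
    intro t
    have hcong : ∀ ω, (∑ j, t j * X ω j) ^ 2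
        = ∑ j, ∑ l, t j * t l * (X ω j * X ω l) := by
      intro ω
      rw [sq, Finset.sum_mul_sum]
      exact Finset.sum_congr rfl fun j _ => Finset.sum_congr rfl fun l _ => by ring
    calc t ⬝ᵥ (Sig *ᵥ t) = ∑ j, ∑ l, t j * t l * (Sig j l) := by
          simp only [dotProduct, mulVec, Finset.mul_sum]
          exact Finset.sum_congr rfl fun j _ => Finset.sum_congr rfl fun l _ => by ring
      _ = ∑ j, ∑ l, ∫ ω, t j * t l * (X ω j * X ω l) ∂μ := by
          refine Finset.sum_congr rfl fun j _ => Finset.sum_congr rfl fun l _ => ?_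
          rw [hSig, integral_const_mul]
      _ = ∫ ω, ∑ j, ∑ l, t j * t l * (X ω j * X ω l) ∂μ := by
          rw [integral_finset_sum _ (fun j _ => integrable_finset_sum _ fun l _ =>
            ((hXX j l).const_mul _))]
          exact Finset.sum_congr rfl fun j _ =>
            (integral_finset_sum _ fun l _ => ((hXX j l).const_mul _)).symm
      _ = ∫ ω, (∑ j, t j * X ω j) ^ 2 ∂μ := by
          exact integral_congr_ae (Filter.Eventually.of_forall fun ω => (hcong ω).symm)
  -- expansion of the risk for a full-dimensional coefficient vector
  have key : ∀ t : Fin d → ℝ,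
      ∫ ω, (Y ω - ∑ j, t j * X ω j) ^ 2 ∂μ
        = c - 2 * (t ⬝ᵥ gam) + t ⬝ᵥ (Sig *ᵥ t) := by
    intro t
    have hS2 : Integrable (fun ω => (∑ j, t j * X ω j) ^ 2) μ := by
      have hcong : (fun ω => (∑ j, t j * X ω j) ^ 2)
          = fun ω => ∑ j, ∑ l, t j * t l * (X ω j * X ω l) := by
        funext ω
        rw [sq, Finset.sum_mul_sum]
        exact Finset.sum_congr rfl fun j _ => Finset.sum_congr rfl fun l _ => by ring
      rw [hcong]
      exact integrable_finset_sum _ fun j _ => integrable_finset_sum _ fun l _ =>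
        ((hXX j l).const_mul _)
    have hYS : Integrable (fun ω => Y ω * ∑ j, t j * X ω j) μ := by
      have hcong : (fun ω => Y ω * ∑ j, t j * X ω j)
          = fun ω => ∑ j, t j * (Y ω * X ω j) := by
        funext ω
        rw [Finset.mul_sum]
        exact Finset.sum_congr rfl fun j _ => by ring
      rw [hcong]
      exact integrable_finset_sum _ fun j _ => ((hYX j).const_mul _)
    have hexp : ∀ ω, (Y ω - ∑ j, t j * X ω j) ^ 2
        = Y ω ^ 2 - 2 * (Y ω * ∑ j, t j * X ω j) + (∑ j, t j * X ω j) ^ 2 := by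
      intro ω; ring
    have hint : ∫ ω, (Y ω - ∑ j, t j * X ω j) ^ 2 ∂μ
        = c - 2 * (∫ ω, Y ω * ∑ j, t j * X ω j ∂μ) + ∫ ω, (∑ j, t j * X ω j) ^ 2 ∂μ := by
      have hsub : Integrable (fun ω => Y ω ^ 2 - 2 * (Y ω * ∑ j, t j * X ω j)) μ :=
        hYY.sub (hYS.const_mul 2)
      rw [integral_congr_ae (Filter.Eventually.of_forall hexp),
        integral_add hsub hS2, integral_sub hYY (hYS.const_mul 2), integral_const_mul]
    have hYSint : ∫ ω, Y ω * ∑ j, t j * X ω j ∂μ = t ⬝ᵥ gam := by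
      have hcong : ∀ ω, Y ω * ∑ j, t j * X ω j = ∑ j, t j * (X ω j * Y ω) := by
        intro ω
        rw [Finset.mul_sum]
        exact Finset.sum_congr rfl fun j _ => by ring
      rw [integral_congr_ae (Filter.Eventually.of_forall hcong),
        integral_finset_sum _ fun j _ => ?_]
      · simp only [dotProduct]
        refine Finset.sum_congr rfl fun j _ => ?_
        rw [integral_const_mul, hgam]
      · have := hYX j
        have hcong2 : (fun ω => t j * (X ω j * Y ω)) = fun ω => t j * (Y ω * X ω j) := by
          funext ω; ring
        rw [hcong2]
        exact this.const_mul _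
    rw [hint, hYSint, hquadInt]
  -- abbreviations for submatrices and subvectors
  set Soo : Matrix ↥obs ↥obs ℝ :=
    Sig.submatrix (Subtype.val : ↥obs → Fin d) (Subtype.val : ↥obs → Fin d) with hSoo
  set Som : Matrix ↥obs ↥(obsᶜ) ℝ :=
    Sig.submatrix (Subtype.val : ↥obs → Fin d) (Subtype.val : ↥(obsᶜ) → Fin d) with hSom
  set Smo : Matrix ↥(obsᶜ) ↥obs ℝ :=
    Sig.submatrix (Subtype.val : ↥(obsᶜ) → Fin d) (Subtype.val : ↥obs → Fin d) with hSmo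
  set Smm : Matrix ↥(obsᶜ) ↥(obsᶜ) ℝ :=
    Sig.submatrix (Subtype.val : ↥(obsᶜ) → Fin d) (Subtype.val : ↥(obsᶜ) → Fin d) with hSmm
  set go : ↥obs → ℝ := fun j => gam j with hgo
  set gm : ↥(obsᶜ) → ℝ := fun j => gam j with hgm
  set θo : ↥obs → ℝ := fun j => θstar j with hθo
  set θm : ↥(obsᶜ) → ℝ := fun j => θstar j with hθm
  -- symmetry of Sig
  have hSymm : ∀ l j, Sig l j = Sig j l := by
    intro l j
    rw [hSig, hSig]
    exact integral_congr_ae (Filter.Eventually.of_forall fun ω => mul_comm _ _)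
  have hSooT : Sooᵀ = Soo := by
    ext i j; simp [hSoo, Matrix.transpose_apply, hSymm]
  have hSmoT : Smoᵀ = Som := by
    ext i j; simp [hSmo, hSom, Matrix.transpose_apply, hSymm]
  have hSomT : Somᵀ = Smo := by
    ext i j; simp [hSmo, hSom, Matrix.transpose_apply, hSymm]
  have hSinv : Soo * Soo⁻¹ = 1 := Matrix.mul_nonsing_inv _ hSobsInv
  have hSinv' : Soo⁻¹ * Soo = 1 := Matrix.nonsing_inv_mul _ hSobsInv
  have hSinvT : (Soo⁻¹)ᵀ = Soo⁻¹ := by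
    rw [Matrix.transpose_nonsing_inv, hSooT]
  -- extension by zero
  set ext : (↥obs → ℝ) → (Fin d → ℝ) :=
    fun θ j => if h : j ∈ obs then θ ⟨j, h⟩ else 0 with hext
  have hext_sum : ∀ (θ : ↥obs → ℝ) (f : Fin d → ℝ),
      ∑ j, ext θ j * f j = ∑ j : ↥obs, θ j * f j.val := by
    intro θ f
    rw [← Finset.sum_subset (Finset.subset_univ obs)
      (fun x _ hx => by simp [hext, hx]),
      ← Finset.sum_coe_sort obs (fun j => ext θ j * f j)]
    exact Finset.sum_congr rfl fun j _ => by simp [hext]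
  have hdot1 : ∀ θ : ↥obs → ℝ, ext θ ⬝ᵥ gam = θ ⬝ᵥ go := by
    intro θ
    simpa only [dotProduct] using hext_sum θ gam
  have hdot2 : ∀ θ : ↥obs → ℝ, ext θ ⬝ᵥ (Sig *ᵥ ext θ) = θ ⬝ᵥ (Soo *ᵥ θ) := by
    intro θ
    have h1 : ext θ ⬝ᵥ (Sig *ᵥ ext θ) = ∑ j : ↥obs, θ j * (Sig *ᵥ ext θ) j.val := by
      simpa only [dotProduct] using hext_sum θ (Sig *ᵥ ext θ)
    rw [h1]
    refine Finset.sum_congr rfl fun j _ => ?_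
    congr 1
    show ∑ l, Sig (j : Fin d) l * ext θ l = (Soo *ᵥ θ) j
    have h2 : ∑ l, Sig (j : Fin d) l * ext θ l = ∑ l, ext θ l * Sig (j : Fin d) l := by
      exact Finset.sum_congr rfl fun l _ => mul_comm _ _
    rw [h2, hext_sum θ (fun l => Sig (j : Fin d) l)]
    simp [mulVec, dotProduct, hSoo, mul_comm]
  -- the risk as a quadratic form in θ
  have hrisk : ∀ θ : ↥obs → ℝ,
      ∫ ω, (Y ω - ∑ j : ↥obs, θ j * X ω j) ^ 2 ∂μ
        = c - 2 * (θ ⬝ᵥ go) + θ ⬝ᵥ (Soo *ᵥ θ) := by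
    intro θ
    have hsum : ∀ ω, (Y ω - ∑ j : ↥obs, θ j * X ω j) ^ 2
        = (Y ω - ∑ j, ext θ j * X ω j) ^ 2 := by
      intro ω
      rw [hext_sum θ (X ω)]
    rw [integral_congr_ae (Filter.Eventually.of_forall hsum), key (ext θ),
      hdot1, hdot2]
  -- positive semidefiniteness of Soo
  have hpsd : ∀ θ : ↥obs → ℝ, 0 ≤ θ ⬝ᵥ (Soo *ᵥ θ) := by
    intro θ
    rw [← hdot2, hquadInt]
    exact integral_nonneg fun ω => sq_nonneg _
  -- the minimizer
  set θhat : ↥obs → ℝ := Soo⁻¹ *ᵥ go with hθhat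
  set m : ℝ := c - go ⬝ᵥ (Soo⁻¹ *ᵥ go) with hm
  have hSoohat : Soo *ᵥ (Soo⁻¹ *ᵥ go) = go := by
    rw [mulVec_mulVec, hSinv, one_mulVec]
  have hcs : ∀ θ : ↥obs → ℝ,
      c - 2 * (θ ⬝ᵥ go) + θ ⬝ᵥ (Soo *ᵥ θ)
        = m + (θ - θhat) ⬝ᵥ (Soo *ᵥ (θ - θhat)) := by
    intro θ
    have h1 : Soo *ᵥ (θ - θhat) = Soo *ᵥ θ - go := by
      rw [mulVec_sub, hθhat, hSoohat]
    have e1 : θhat ⬝ᵥ (Soo *ᵥ θ) = θ ⬝ᵥ go := by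
      rw [dot_mulVec_comm, hSooT, hθhat, hSoohat]
    have e2 : θhat ⬝ᵥ go = go ⬝ᵥ (Soo⁻¹ *ᵥ go) := by
      rw [hθhat, dotProduct_comm]
    have e3 : (θ - θhat) ⬝ᵥ (Soo *ᵥ (θ - θhat))
        = θ ⬝ᵥ (Soo *ᵥ θ) - θ ⬝ᵥ go - θ ⬝ᵥ go + go ⬝ᵥ (Soo⁻¹ *ᵥ go) := by
      rw [h1, dotProduct_sub, sub_dotProduct, sub_dotProduct, e1, e2]
      ring
    rw [e3, hm]
    ring
  have hlb : ∀ θ : ↥obs → ℝ,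
      m ≤ ∫ ω, (Y ω - ∑ j : ↥obs, θ j * X ω j) ^ 2 ∂μ := by
    intro θ
    rw [hrisk, hcs]
    linarith [hpsd (θ - θhat)]
  have hvalhat : ∫ ω, (Y ω - ∑ j : ↥obs, θhat j * X ω j) ^ 2 ∂μ = m := by
    rw [hrisk, hcs, sub_self, mulVec_zero, dotProduct_zero, add_zero]
  have hinf : (⨅ θ : ↥obs → ℝ, ∫ ω, (Y ω - ∑ j : ↥obs, θ j * X ω j) ^ 2 ∂μ) = m := by
    refine le_antisymm ?_ (le_ciInf hlb)
    exact (ciInf_le ⟨m, by rintro x ⟨θ, rfl⟩; exact hlb θ⟩ θhat).trans_eq hvalhat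
  rw [hinf]
  -- Now the algebraic identity for the right-hand side
  have hSg : Sig *ᵥ θstar = gam := by
    rw [hθstar, mulVec_mulVec, Matrix.mul_nonsing_inv _ hSigInv, one_mulVec]
  have hσ2' : σ2 = c - θstar ⬝ᵥ gam := by
    rw [hσ2, key θstar, hSg]
    ring
  have hsplit : ∀ f : Fin d → ℝ,
      ∑ j, f j = (∑ j : ↥obs, f j.val) + ∑ j : ↥(obsᶜ), f j.val := by
    intro f
    rw [← Finset.sum_add_sum_compl obs f, Finset.sum_coe_sort, Finset.sum_coe_sort]
  have hgo_eq : go = Soo *ᵥ θo + Som *ᵥ θm := by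
    funext j
    have h := congrFun hSg (j : Fin d)
    show gam (j : Fin d) = (Soo *ᵥ θo) j + (Som *ᵥ θm) j
    rw [← h]
    show ∑ l, Sig (j : Fin d) l * θstar l = _
    rw [hsplit (fun l => Sig (j : Fin d) l * θstar l)]
    simp [mulVec, dotProduct, hSoo, hSom, hθo, hθm]
  have hgm_eq : gm = Smo *ᵥ θo + Smm *ᵥ θm := by
    funext j
    have h := congrFun hSg (j : Fin d)
    show gam (j : Fin d) = (Smo *ᵥ θo) j + (Smm *ᵥ θm) j
    rw [← h]
    show ∑ l, Sig (j : Fin d) l * θstar l = _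
    rw [hsplit (fun l => Sig (j : Fin d) l * θstar l)]
    simp [mulVec, dotProduct, hSmo, hSmm, hθo, hθm]
  have hθgam : θstar ⬝ᵥ gam = θo ⬝ᵥ go + θm ⬝ᵥ gm := by
    show ∑ j, θstar j * gam j = _
    rw [hsplit (fun j => θstar j * gam j)]
    rfl
  -- abbreviation
  set w : ↥obs → ℝ := Som *ᵥ θm with hw
  have e_inv : Soo⁻¹ *ᵥ go = θo + Soo⁻¹ *ᵥ w := by
    rw [hgo_eq, mulVec_add, mulVec_mulVec, hSinv', one_mulVec, hw]
  have b1 : (Soo *ᵥ θo) ⬝ᵥ θo = θo ⬝ᵥ (Soo *ᵥ θo) := dotProduct_comm _ _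
  have b2 : w ⬝ᵥ θo = θo ⬝ᵥ w := dotProduct_comm _ _
  have b3 : (Soo *ᵥ θo) ⬝ᵥ (Soo⁻¹ *ᵥ w) = θo ⬝ᵥ w := by
    rw [dot_mulVec_comm, hSinvT, mulVec_mulVec, hSinv', one_mulVec, dotProduct_comm]
  have b4 : w ⬝ᵥ (Soo⁻¹ *ᵥ w) = θm ⬝ᵥ ((Smo * Soo⁻¹ * Som) *ᵥ θm) := by
    rw [dotProduct_comm, hw, dot_mulVec_comm, hSomT]
    rw [mulVec_mulVec, mulVec_mulVec, Matrix.mul_assoc]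
  have a1 : go ⬝ᵥ (Soo⁻¹ *ᵥ go)
      = θo ⬝ᵥ (Soo *ᵥ θo) + θo ⬝ᵥ w + θo ⬝ᵥ w
        + θm ⬝ᵥ ((Smo * Soo⁻¹ * Som) *ᵥ θm) := by
    rw [e_inv, hgo_eq]
    rw [dotProduct_add, add_dotProduct, add_dotProduct, b1, b2, b3, b4, hw]
    ring
  have a2 : θm ⬝ᵥ (V *ᵥ θm)
      = θm ⬝ᵥ (Smm *ᵥ θm) - θm ⬝ᵥ ((Smo * Soo⁻¹ * Som) *ᵥ θm) := by
    rw [hV, sub_mulVec, dotProduct_sub]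
  have a3 : θo ⬝ᵥ go = θo ⬝ᵥ (Soo *ᵥ θo) + θo ⬝ᵥ w := by
    rw [hgo_eq, dotProduct_add, hw]
  have a5 : θm ⬝ᵥ (Smo *ᵥ θo) = θo ⬝ᵥ w := by
    rw [dot_mulVec_comm, hSmoT, hw, dotProduct_comm]
  have a4 : θm ⬝ᵥ gm = θo ⬝ᵥ w + θm ⬝ᵥ (Smm *ᵥ θm) := by
    rw [hgm_eq, dotProduct_add, a5]
  rw [hm, hσ2']
  linarith [a1, a2, a3, a4, hθgam]
end

section
/- Assume π := min_{l,j ∈ {1,…,d}} Π_{lj} > 0 and M² := max(E[‖X‖₂⁴], E[Y²‖X‖₂²]) < ∞. Then the component-wise covariance estimator satisfies E‖Σ − Σ̂^{cw}‖_F² ≤ (1−π)^n · Tr(Σ²) + (2/(nπ)) · E[‖X‖₂⁴], where ‖·‖_F is the Frobenius norm; similarly E‖γ − γ̂^{cw}‖₂² ≤ (1−π)^n · ‖γ‖₂² + (2/(nπ)) · E[Y²‖X‖₂²]. -/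
open MeasureTheory ProbabilityTheory Matrix

lemma aux_integral_prod {Ω : Type*} [MeasurableSpace Ω] {μ : Measure Ω}
    [IsProbabilityMeasure μ] {n : ℕ} (f : Fin n → Ω → ℝ)
    (hindep : iIndepFun f μ)
    (hmeas : ∀ i, Measurable (f i)) (hint : ∀ i, Integrable (f i) μ) :
    Integrable (fun ω => ∏ i, f i ω) μ ∧
      ∫ ω, ∏ i, f i ω ∂μ = ∏ i, ∫ ω, f i ω ∂μ := by
  suffices h : ∀ s : Finset (Fin n),
      Integrable (fun ω => ∏ i ∈ s, f i ω) μ ∧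
        ∫ ω, ∏ i ∈ s, f i ω ∂μ = ∏ i ∈ s, ∫ ω, f i ω ∂μ from h Finset.univ
  intro s
  induction s using Finset.induction with
  | empty => simp
  | @insert a s ha ih =>
    have hind : IndepFun (f a) (fun ω => ∏ i ∈ s, f i ω) μ := by
      have := hindep.indepFun_finset_prod_of_notMem hmeas ha
      rw [Finset.prod_fn] at this
      exact this.symm
    have hmul : Integrable (fun ω => f a ω * ∏ i ∈ s, f i ω) μ :=
      hind.integrable_mul (hint a) ih.1
    constructor
    · simpa [Finset.prod_insert ha] using hmul
    · have : ∫ ω, f a ω * ∏ i ∈ s, f i ω ∂μ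
          = (∫ ω, f a ω ∂μ) * ∫ ω, ∏ i ∈ s, f i ω ∂μ :=
        hind.integral_fun_mul_eq_mul_integral (hint a).aestronglyMeasurable ih.1.aestronglyMeasurable
      simp only [Finset.prod_insert ha]
      rw [this, ih.2]

lemma aux_transfer {Ω : Type*} [MeasurableSpace Ω] {μ : Measure Ω}
    {E : Type*} [MeasurableSpace E] {T T' : Ω → E} (hT : Measurable T) (hT' : Measurable T')
    (hmap : μ.map T = μ.map T') (g : E → ℝ) (hg : Measurable g) :
    (∫ ω, g (T ω) ∂μ = ∫ ω, g (T' ω) ∂μ) ∧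
      (Integrable (fun ω => g (T' ω)) μ → Integrable (fun ω => g (T ω)) μ) := by
  constructor
  · rw [← integral_map hT.aemeasurable hg.aestronglyMeasurable,
        ← integral_map hT'.aemeasurable hg.aestronglyMeasurable, hmap]
  · intro h
    have h1 : Integrable g (μ.map T') :=
      (integrable_map_measure hg.aestronglyMeasurable hT'.aemeasurable).mpr h
    rw [← hmap] at h1
    exact (integrable_map_measure hg.aestronglyMeasurable hT.aemeasurable).mp h1

lemma aux_sum_bool {n : ℕ} (w : ℕ → ℝ) :
    ∑ b : Fin n → Bool, w (Finset.univ.filter (fun i => b i = true)).card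
      = ∑ j ∈ Finset.range (n + 1), (n.choose j : ℝ) * w j := by
  have h1 : ∑ S : Finset (Fin n), w S.card
      = ∑ b : Fin n → Bool, w (Finset.univ.filter (fun i => b i = true)).card := by
    refine Fintype.sum_equiv
      (⟨fun S => fun i => decide (i ∈ S),
        fun b => Finset.univ.filter (fun i => b i = true),
        fun S => by ext i; simp, fun b => by funext i; simp⟩ :
          Finset (Fin n) ≃ (Fin n → Bool)) _ _ fun S => ?_
    simp only [Equiv.coe_fn_mk, decide_eq_true_eq, Finset.filter_univ_mem]
  rw [← h1]
  have h2 : (Finset.univ : Finset (Finset (Fin n))) = Finset.univ.powerset := by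
    rw [Finset.powerset_univ]
  rw [h2, Finset.sum_powerset]
  simp only [Finset.card_univ, Fintype.card_fin]
  refine Finset.sum_congr rfl fun j hj => ?_
  have : ∀ t ∈ Finset.powersetCard j (Finset.univ : Finset (Fin n)), w t.card = w j := by
    intro t ht
    rw [Finset.mem_powersetCard_univ.mp ht]
  rw [Finset.sum_congr rfl this, Finset.sum_const, Finset.card_powersetCard,
    Finset.card_univ, Fintype.card_fin, nsmul_eq_mul]

lemma aux_binom {n : ℕ} (hn : 0 < n) {p π : ℝ} (hπ : 0 < π) (hπp : π ≤ p) (hp1 : p ≤ 1) :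
    ∑ j ∈ Finset.range (n + 1),
        (n.choose j : ℝ) * (if 0 < j then p ^ j * (1 - p) ^ (n - j) * (1 / j) else 0)
      ≤ 2 / (n * π) := by
  have hp0 : 0 < p := lt_of_lt_of_le hπ hπp
  have h1p : 0 ≤ 1 - p := by linarith
  have hn1 : (0:ℝ) < (n:ℝ) + 1 := by positivity
  have step : ∀ j ∈ Finset.range (n + 1),
      (n.choose j : ℝ) * (if 0 < j then p ^ j * (1 - p) ^ (n - j) * (1 / j) else 0)
        ≤ 2 / (((n:ℝ) + 1) * p) *
          (p ^ (j + 1) * (1 - p) ^ (n + 1 - (j + 1)) * ((n + 1).choose (j + 1) : ℝ)) := by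
    intro j hj
    rcases Nat.eq_zero_or_pos j with rfl | hjpos
    · simp only [lt_irrefl, if_false, mul_zero]
      positivity
    · rw [if_pos hjpos]
      have hjR : (1:ℝ) ≤ (j:ℝ) := by exact_mod_cast hjpos
      have hj0R : (0:ℝ) < (j:ℝ) := by linarith
      have hsub : n + 1 - (j + 1) = n - j := by omega
      rw [hsub, pow_succ]
      set A := (n.choose j : ℝ) with hAdef
      set C := ((n + 1).choose (j + 1) : ℝ) with hCdef
      have hC0 : (0:ℝ) ≤ C := by positivity
      have hA : ((n:ℝ) + 1) * A = C * ((j:ℝ) + 1) := by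
        have := Nat.add_one_mul_choose_eq n j
        have h := congrArg (fun x : ℕ => (x : ℝ)) this
        push_cast at h
        linarith [h]
      have key : A / (j:ℝ) ≤ 2 * C / ((n:ℝ) + 1) := by
        rw [div_le_div_iff₀ hj0R hn1]
        nlinarith [mul_nonneg hC0 (sub_nonneg.mpr hjR)]
      have hB : (0:ℝ) ≤ p ^ j * (1 - p) ^ (n - j) := by positivity
      have hrhs : 2 / (((n:ℝ) + 1) * p) * (p ^ j * p * (1 - p) ^ (n - j) * C)
          = 2 * C / ((n:ℝ) + 1) * (p ^ j * (1 - p) ^ (n - j)) := by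
        field_simp
      rw [hrhs]
      calc A * (p ^ j * (1 - p) ^ (n - j) * (1 / j))
          = A / (j:ℝ) * (p ^ j * (1 - p) ^ (n - j)) := by ring
        _ ≤ 2 * C / ((n:ℝ) + 1) * (p ^ j * (1 - p) ^ (n - j)) :=
            mul_le_mul_of_nonneg_right key hB
  calc ∑ j ∈ Finset.range (n + 1),
        (n.choose j : ℝ) * (if 0 < j then p ^ j * (1 - p) ^ (n - j) * (1 / j) else 0)
      ≤ ∑ j ∈ Finset.range (n + 1), 2 / (((n:ℝ) + 1) * p) *
          (p ^ (j + 1) * (1 - p) ^ (n + 1 - (j + 1)) * ((n + 1).choose (j + 1) : ℝ)) :=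
        Finset.sum_le_sum step
    _ = 2 / (((n:ℝ) + 1) * p) * ∑ j ∈ Finset.range (n + 1),
          p ^ (j + 1) * (1 - p) ^ (n + 1 - (j + 1)) * ((n + 1).choose (j + 1) : ℝ) := by
        rw [Finset.mul_sum]
    _ ≤ 2 / (((n:ℝ) + 1) * p) * 1 := by
        refine mul_le_mul_of_nonneg_left ?_ (by positivity)
        have hbin : ∑ m ∈ Finset.range (n + 2),
            p ^ m * (1 - p) ^ (n + 1 - m) * ((n + 1).choose m : ℝ) = 1 := by
          have := add_pow p (1 - p) (n + 1)
          simp only [add_sub_cancel, one_pow] at this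
          linarith [this.symm]
        have hsplit := Finset.sum_range_succ' (fun m =>
          p ^ m * (1 - p) ^ (n + 1 - m) * ((n + 1).choose m : ℝ)) (n + 1)
        have h0 : (0:ℝ) ≤ p ^ 0 * (1 - p) ^ (n + 1 - 0) * ((n + 1).choose 0 : ℝ) := by
          positivity
        rw [hbin] at hsplit
        linarith [hsplit]
    _ ≤ 2 / ((n:ℝ) * π) := by
        rw [mul_one]
        refine div_le_div_of_nonneg_left (by norm_num) (by positivity) ?_
        have hnR : (1:ℝ) ≤ (n:ℝ) := by exact_mod_cast hn
        nlinarith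

lemma keylem {Ω : Type*} [MeasurableSpace Ω] (μ : Measure Ω) [IsProbabilityMeasure μ]
    {d K n : ℕ} [NeZero n]
    (H : Fin n → Ω → Fin K) (X : Fin n → Ω → Fin d → ℝ) (Y : Fin n → Ω → ℝ)
    (hHmeas : ∀ i, Measurable (H i))
    (hXmeas : ∀ i j, Measurable fun ω => X i ω j)
    (hYmeas : ∀ i, Measurable (Y i))
    (hiid : iIndepFun
      (fun i ω => (H i ω, X i ω, Y i ω)) μ)
    (hident : ∀ i, μ.map (fun ω => (H i ω, X i ω, Y i ω))
      = μ.map (fun ω => (H 0 ω, X 0 ω, Y 0 ω)))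
    (hMCAR : ∀ i, IndepFun (H i) (fun ω => (X i ω, Y i ω)) μ)
    (s : Fin K → Bool) (ζ : (Fin d → ℝ) × ℝ → ℝ) (hζ : Measurable ζ)
    (hζ2 : Integrable (fun ω => ζ (X 0 ω, Y 0 ω) ^ 2) μ)
    (m p π : ℝ)
    (hm : m = ∫ ω, ζ (X 0 ω, Y 0 ω) ∂μ)
    (hp : p = ∫ ω, (if s (H 0 ω) = true then (1:ℝ) else 0) ∂μ)
    (hπp : π ≤ p) (hπpos : 0 < π)
    (est : Ω → ℝ)
    (hest : ∀ ω, est ω =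
      if 0 < (Finset.univ.filter fun i : Fin n => s (H i ω) = true).card then
        (1 / ((Finset.univ.filter fun i : Fin n => s (H i ω) = true).card : ℝ)) *
          ∑ i, (if s (H i ω) = true then ζ (X i ω, Y i ω) else 0)
      else 0) :
    Integrable (fun ω => (m - est ω) ^ 2) μ ∧
    ∫ ω, (m - est ω) ^ 2 ∂μ
      ≤ (1 - π) ^ n * m ^ 2 + 2 / ((n : ℝ) * π) * ∫ ω, ζ (X 0 ω, Y 0 ω) ^ 2 ∂μ := by
  classical
  -- basic measurability
  have hsmeas : Measurable s := measurable_of_countable s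
  have hXimeas : ∀ i, Measurable (X i) := fun i => measurable_pi_iff.mpr (hXmeas i)
  have hpairmeas : ∀ i, Measurable (fun ω => (X i ω, Y i ω)) :=
    fun i => (hXimeas i).prodMk (hYmeas i)
  have hTmeas : ∀ i, Measurable (fun ω => (H i ω, X i ω, Y i ω)) :=
    fun i => (hHmeas i).prodMk (hpairmeas i)
  have hZ0meas : Measurable (fun ω => ζ (X 0 ω, Y 0 ω)) := hζ.comp (hpairmeas 0)
  -- basic integrability
  have hZ0int : Integrable (fun ω => ζ (X 0 ω, Y 0 ω)) μ := by
    refine Integrable.mono' ((integrable_const (1:ℝ)).add hζ2)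
      hZ0meas.aestronglyMeasurable (ae_of_all _ fun ω => ?_)
    simp only [Pi.add_apply, Real.norm_eq_abs]
    nlinarith [sq_nonneg (|ζ (X 0 ω, Y 0 ω)| - 1), abs_nonneg (ζ (X 0 ω, Y 0 ω)),
      sq_abs (ζ (X 0 ω, Y 0 ω))]
  have hshift1 : Integrable (fun ω => m - ζ (X 0 ω, Y 0 ω)) μ :=
    (integrable_const m).sub hZ0int
  have hshift2 : Integrable (fun ω => (m - ζ (X 0 ω, Y 0 ω)) ^ 2) μ := by
    have heq : (fun ω => (m - ζ (X 0 ω, Y 0 ω)) ^ 2)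
        = fun ω => (m ^ 2 - (2 * m) * ζ (X 0 ω, Y 0 ω)) + ζ (X 0 ω, Y 0 ω) ^ 2 := by
      funext ω; ring
    rw [heq]
    exact ((integrable_const _).sub (hZ0int.const_mul _)).add hζ2
  have hind0int : Integrable (fun ω => if s (H 0 ω) = true then (1:ℝ) else 0) μ := by
    refine Integrable.mono' (integrable_const (1:ℝ))
      (Measurable.aestronglyMeasurable ?_) (ae_of_all _ fun ω => ?_)
    · exact Measurable.ite ((hsmeas.comp (hHmeas 0)) (measurableSet_singleton true))
        measurable_const measurable_const
    · split <;> simp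
  have h1p : p ≤ 1 := by
    rw [hp]
    calc ∫ ω, (if s (H 0 ω) = true then (1:ℝ) else 0) ∂μ
        ≤ ∫ _, (1:ℝ) ∂μ := by
          refine integral_mono hind0int (integrable_const 1) fun ω => ?_
          split <;> norm_num
      _ = 1 := by simp
  have hppos : 0 < p := lt_of_lt_of_le hπpos hπp
  -- variance facts
  set I2 : ℝ := ∫ ω, ζ (X 0 ω, Y 0 ω) ^ 2 ∂μ with hI2
  set Var : ℝ := ∫ ω, (m - ζ (X 0 ω, Y 0 ω)) ^ 2 ∂μ with hVar
  have hVar0 : 0 ≤ Var := integral_nonneg fun ω => sq_nonneg _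
  have hI20 : 0 ≤ I2 := integral_nonneg fun ω => sq_nonneg _
  have hVarle : Var ≤ I2 := by
    have heq : (fun ω => (m - ζ (X 0 ω, Y 0 ω)) ^ 2)
        = fun ω => (m ^ 2 - (2 * m) * ζ (X 0 ω, Y 0 ω)) + ζ (X 0 ω, Y 0 ω) ^ 2 := by
      funext ω; ring
    have h1 : Integrable (fun ω => m ^ 2 - (2 * m) * ζ (X 0 ω, Y 0 ω)) μ :=
      (integrable_const _).sub (hZ0int.const_mul _)
    have h2 : Integrable (fun ω => (2 * m) * ζ (X 0 ω, Y 0 ω)) μ := hZ0int.const_mul _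
    rw [hVar, heq, integral_add h1 hζ2, integral_sub (integrable_const _) h2,
      integral_const, integral_const_mul, ← hm]
    simp only [probReal_univ, ENNReal.toReal_one, smul_eq_mul, one_mul]
    rw [hI2]
    nlinarith [sq_nonneg m]
  -- the ψ values
  have hψ0 : (∫ ω, (m - ζ (X 0 ω, Y 0 ω)) ^ 0 ∂μ) = 1 := by simp
  have hψ1 : (∫ ω, (m - ζ (X 0 ω, Y 0 ω)) ^ 1 ∂μ) = 0 := by
    simp only [pow_one]
    rw [integral_sub (integrable_const m) hZ0int, integral_const]
    simp only [probReal_univ, ENNReal.toReal_one, smul_eq_mul, one_mul]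
    rw [← hm]; ring
  -- per-factor functions
  set χf : Bool → Fin K → ℝ := fun c h => if s h = c then 1 else 0 with hχf
  set gf : ℕ → (Fin d → ℝ) × ℝ → ℝ := fun e t => (m - ζ t) ^ e with hgf
  have hχmeas : ∀ c, Measurable (χf c) := fun c =>
    Measurable.ite (hsmeas (measurableSet_singleton c)) measurable_const measurable_const
  have hgmeas : ∀ e, Measurable (gf e) := fun e => ((hζ.const_sub m).pow_const e)
  have hg0int : ∀ e, e ≤ 2 → Integrable (fun ω => gf e (X 0 ω, Y 0 ω)) μ := by
    intro e he
    interval_cases e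
    · simpa [hgf] using (integrable_const (1:ℝ))
    · simpa [hgf] using hshift1
    · exact hshift2
  -- value of the indicator integral
  have hχval : ∀ c : Bool, (∫ ω, χf c (H 0 ω) ∂μ) = if c then p else 1 - p := by
    intro c
    cases c
    · have heq : ∀ ω, χf false (H 0 ω)
          = 1 - (if s (H 0 ω) = true then (1:ℝ) else 0) := by
        intro ω; by_cases hh : s (H 0 ω) = true <;> simp [hχf, hh]
      rw [integral_congr_ae (ae_of_all _ heq),
        integral_sub (integrable_const 1) hind0int, integral_const]
      simp only [probReal_univ, ENNReal.toReal_one, smul_eq_mul, one_mul]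
      rw [← hp]; simp
    · simp only [if_true]
      rw [hp]
  -- per-factor integral
  have hχqint : ∀ (q : Fin n) (c : Bool),
      Integrable (fun ω => χf c (H q ω)) μ := by
    intro q c
    refine Integrable.mono' (integrable_const (1:ℝ))
      ((hχmeas c).comp (hHmeas q)).aestronglyMeasurable (ae_of_all _ fun ω => ?_)
    simp only [hχf]; split <;> simp
  have hfac : ∀ (q : Fin n) (c : Bool) (e : ℕ), e ≤ 2 →
      Integrable (fun ω => χf c (H q ω) * gf e (X q ω, Y q ω)) μ ∧
      (∫ ω, χf c (H q ω) * gf e (X q ω, Y q ω) ∂μ)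
        = (if c then p else 1 - p) * ∫ ω, gf e (X 0 ω, Y 0 ω) ∂μ := by
    intro q c e he
    have htr := aux_transfer (hTmeas q) (hTmeas 0) (hident q)
      (fun t => gf e t.2) ((hgmeas e).comp measurable_snd)
    have hgqint : Integrable (fun ω => gf e (X q ω, Y q ω)) μ :=
      htr.2 (hg0int e he)
    have htrχ := aux_transfer (hTmeas q) (hTmeas 0) (hident q)
      (fun t => χf c t.1) ((hχmeas c).comp measurable_fst)
    have hindep : IndepFun (fun ω => χf c (H q ω)) (fun ω => gf e (X q ω, Y q ω)) μ :=
      (hMCAR q).comp (hχmeas c) (hgmeas e)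
    constructor
    · exact hindep.integrable_mul (hχqint q c) hgqint
    · have h1 : (∫ ω, χf c (H q ω) * gf e (X q ω, Y q ω) ∂μ)
          = (∫ ω, χf c (H q ω) ∂μ) * ∫ ω, gf e (X q ω, Y q ω) ∂μ :=
        hindep.integral_fun_mul_eq_mul_integral (hχqint q c).aestronglyMeasurable hgqint.aestronglyMeasurable
      rw [h1]
      congr 1
      · rw [show (∫ ω, χf c (H q ω) ∂μ)
            = ∫ ω, (fun t : Fin K × (Fin d → ℝ) × ℝ => χf c t.1)
                ((fun ω => (H q ω, X q ω, Y q ω)) ω) ∂μ from rfl, htrχ.1]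
        exact hχval c
      · exact htr.1
  -- product of factors over all indices
  have hprod : ∀ (b : Fin n → Bool) (e : Fin n → ℕ), (∀ q, e q ≤ 2) →
      Integrable (fun ω => ∏ q, χf (b q) (H q ω) * gf (e q) (X q ω, Y q ω)) μ ∧
      (∫ ω, ∏ q, χf (b q) (H q ω) * gf (e q) (X q ω, Y q ω) ∂μ)
        = ∏ q, ((if b q then p else 1 - p) * ∫ ω, gf (e q) (X 0 ω, Y 0 ω) ∂μ) := by
    intro b e he
    have hind : iIndepFun
        (fun q ω => χf (b q) (H q ω) * gf (e q) (X q ω, Y q ω)) μ := by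
      have := hiid.comp
        (fun q => fun t : Fin K × (Fin d → ℝ) × ℝ => χf (b q) t.1 * gf (e q) t.2)
        (fun q => ((hχmeas (b q)).comp measurable_fst).mul
          ((hgmeas (e q)).comp measurable_snd))
      exact this
    have := aux_integral_prod _ hind
      (fun q => (((hχmeas (b q)).comp (hHmeas q)).mul
        ((hgmeas (e q)).comp (hpairmeas q))))
      (fun q => (hfac q (b q) (e q) (he q)).1)
    refine ⟨this.1, this.2.trans ?_⟩
    exact Finset.prod_congr rfl fun q _ => (hfac q (b q) (e q) (he q)).2
    -- product of the bernoulli weights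
  have hP : ∀ b : Fin n → Bool,
      (∏ q, (if b q = true then p else 1 - p))
        = p ^ (Finset.univ.filter fun i => b i = true).card
          * (1 - p) ^ (n - (Finset.univ.filter fun i => b i = true).card) := by
    intro b
    have hcc := Finset.card_filter_add_card_filter_not
      (s := (Finset.univ : Finset (Fin n))) (p := fun q => b q = true)
    simp only [Finset.card_univ, Fintype.card_fin] at hcc
    have hnc : (Finset.filter (fun q => ¬ b q = true) Finset.univ).card
        = n - (Finset.filter (fun i => b i = true) Finset.univ).card := by omega
    rw [Finset.prod_ite (fun _ => p) (fun _ => 1 - p), Finset.prod_const, Finset.prod_const, hnc]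
  -- the per-configuration term
  have hterm : ∀ (b : Fin n → Bool) (S : Finset (Fin n)),
      S = Finset.univ.filter (fun i => b i = true) →
      Integrable (fun ω => (∏ i, if s (H i ω) = b i then (1:ℝ) else 0) *
        (m - (if 0 < S.card then
          (1 / (S.card : ℝ)) * ∑ i ∈ S, ζ (X i ω, Y i ω) else 0)) ^ 2) μ ∧
      (∫ ω, (∏ i, if s (H i ω) = b i then (1:ℝ) else 0) *
        (m - (if 0 < S.card then
          (1 / (S.card : ℝ)) * ∑ i ∈ S, ζ (X i ω, Y i ω) else 0)) ^ 2 ∂μ)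
        = p ^ S.card * (1 - p) ^ (n - S.card)
            * (if 0 < S.card then Var * (1 / (S.card : ℝ)) else m ^ 2) := by
    intro b S hS
    have hcardeq : S.card = (Finset.univ.filter fun i => b i = true).card := by rw [hS]
    by_cases hcard : 0 < S.card
    · -- nonempty configuration
      have hkR : (0:ℝ) < (S.card : ℝ) := by exact_mod_cast hcard
      have hkR0 : (S.card : ℝ) ≠ 0 := ne_of_gt hkR
      simp only [if_pos hcard]
      have he2 : ∀ (i i' q : Fin n),
          ((if q = i then 1 else 0) + (if q = i' then 1 else 0) : ℕ) ≤ 2 := by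
        intro i i' q; split <;> split <;> norm_num
      -- pointwise identity
      have hptw : (fun ω => (∏ i, if s (H i ω) = b i then (1:ℝ) else 0) *
          (m - (1 / (S.card : ℝ)) * ∑ i ∈ S, ζ (X i ω, Y i ω)) ^ 2)
          = fun ω => (1 / (S.card : ℝ)) ^ 2 * ∑ i ∈ S, ∑ i' ∈ S,
              ∏ q, χf (b q) (H q ω) *
                gf ((if q = i then 1 else 0) + (if q = i' then 1 else 0)) (X q ω, Y q ω) := by
        funext ω
        have hG : m - (1 / (S.card : ℝ)) * ∑ i ∈ S, ζ (X i ω, Y i ω)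
            = (1 / (S.card : ℝ)) * ∑ i ∈ S, (m - ζ (X i ω, Y i ω)) := by
          have hcm : (1 / (S.card : ℝ)) * ((S.card : ℝ) * m) = m := by
            field_simp
          rw [Finset.sum_sub_distrib, Finset.sum_const, nsmul_eq_mul, mul_sub, hcm]
        rw [hG, mul_pow, sq (∑ i ∈ S, (m - ζ (X i ω, Y i ω))), Finset.sum_mul_sum]
        rw [mul_left_comm]
        congr 1
        rw [Finset.mul_sum]
        refine Finset.sum_congr rfl fun i _ => ?_
        rw [Finset.mul_sum]
        refine Finset.sum_congr rfl fun i' _ => ?_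
        -- inner identity
        rw [Finset.prod_mul_distrib]
        have h1 : (∏ q, χf (b q) (H q ω))
            = ∏ i, if s (H i ω) = b i then (1:ℝ) else 0 := by
          simp only [hχf]
        have h2 : (∏ q, gf ((if q = i then 1 else 0) + (if q = i' then 1 else 0)) (X q ω, Y q ω))
            = (m - ζ (X i ω, Y i ω)) * (m - ζ (X i' ω, Y i' ω)) := by
          have hsplit : ∀ q : Fin n,
              gf ((if q = i then 1 else 0) + (if q = i' then 1 else 0)) (X q ω, Y q ω)
              = (m - ζ (X q ω, Y q ω)) ^ (if q = i then 1 else 0)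
                * (m - ζ (X q ω, Y q ω)) ^ (if q = i' then 1 else 0) := by
            intro q; simp only [hgf, pow_add]
          rw [Finset.prod_congr rfl fun q _ => hsplit q, Finset.prod_mul_distrib]
          have hone : ∀ i0 : Fin n,
              (∏ q, (m - ζ (X q ω, Y q ω)) ^ (if q = i0 then 1 else 0))
                = m - ζ (X i0 ω, Y i0 ω) := by
            intro i0
            have : ∀ q : Fin n, (m - ζ (X q ω, Y q ω)) ^ (if q = i0 then 1 else 0)
                = if q = i0 then m - ζ (X q ω, Y q ω) else 1 := by
              intro q; by_cases hq : q = i0 <;> simp [hq]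
            rw [Finset.prod_congr rfl fun q _ => this q, Finset.prod_ite_eq']
            all_goals simp
          rw [hone i, hone i']
        rw [h1, h2]
      constructor
      · rw [hptw]
        exact Integrable.const_mul (integrable_finset_sum S (fun i _ =>
          integrable_finset_sum S (fun i' _ =>
            (hprod b _ (he2 i i')).1))) _
      · rw [hptw, integral_const_mul,
          integral_finset_sum S (fun i _ => integrable_finset_sum S (fun i' _ =>
            (hprod b _ (he2 i i')).1))]
        have hin : ∀ i ∈ S, (∫ ω, ∑ i' ∈ S, ∏ q, χf (b q) (H q ω) *
              gf ((if q = i then 1 else 0) + (if q = i' then 1 else 0)) (X q ω, Y q ω) ∂μ)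
            = ∑ i' ∈ S, ∏ q, ((if b q = true then p else 1 - p) *
                ∫ ω, gf ((if q = i then 1 else 0) + (if q = i' then 1 else 0)) (X 0 ω, Y 0 ω) ∂μ) := by
          intro i _
          rw [integral_finset_sum S (fun i' _ => (hprod b _ (he2 i i')).1)]
          exact Finset.sum_congr rfl fun i' _ => (hprod b _ (he2 i i')).2
        rw [Finset.sum_congr rfl hin]
        have hval : ∀ i ∈ S, ∀ i' ∈ S,
            (∏ q, ((if b q = true then p else 1 - p) *
              ∫ ω, gf ((if q = i then 1 else 0) + (if q = i' then 1 else 0)) (X 0 ω, Y 0 ω) ∂μ))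
            = (p ^ S.card * (1 - p) ^ (n - S.card)) * (if i = i' then Var else 0) := by
          intro i _ i' _
          rw [Finset.prod_mul_distrib, hP b, ← hcardeq]
          congr 1
          by_cases hii : i = i'
          · subst hii
            have hfactors : ∀ q : Fin n,
                (∫ ω, gf ((if q = i then 1 else 0) + (if q = i then 1 else 0)) (X 0 ω, Y 0 ω) ∂μ)
                  = if q = i then Var else 1 := by
              intro q
              by_cases hq : q = i
              · subst hq
                rw [show ((if q = q then 1 else 0) + (if q = q then 1 else 0) : ℕ) = 2
                    by simp]
                simp only [if_pos rfl, hgf]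
                exact hVar.symm
              · rw [show ((if q = i then 1 else 0) + (if q = i then 1 else 0) : ℕ) = 0
                    by simp [hq], if_neg hq]
                simp only [hgf]
                exact hψ0
            rw [Finset.prod_congr rfl fun q _ => hfactors q, Finset.prod_ite_eq']
            all_goals simp
          · rw [if_neg hii]
            refine Finset.prod_eq_zero (Finset.mem_univ i) ?_
            rw [if_pos rfl, if_neg (fun h => hii h)]
            simpa only [hgf] using hψ1
        have hsum2 : (∑ i ∈ S, ∑ i' ∈ S,
            ∏ q, ((if b q = true then p else 1 - p) *
              ∫ ω, gf ((if q = i then 1 else 0) + (if q = i' then 1 else 0)) (X 0 ω, Y 0 ω) ∂μ))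
            = (S.card : ℝ) * ((p ^ S.card * (1 - p) ^ (n - S.card)) * Var) := by
          rw [Finset.sum_congr rfl (fun i hi => Finset.sum_congr rfl (fun i' hi' => hval i hi i' hi'))]
          have : ∀ i ∈ S, (∑ i' ∈ S, (p ^ S.card * (1 - p) ^ (n - S.card)) * (if i = i' then Var else 0))
              = (p ^ S.card * (1 - p) ^ (n - S.card)) * Var := by
            intro i hi
            simp only [mul_ite, mul_zero]
            rw [Finset.sum_ite_eq, if_pos hi]
          rw [Finset.sum_congr rfl this, Finset.sum_const, nsmul_eq_mul]
        rw [hsum2]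
        field_simp
    · -- empty configuration
      have hk0 : S.card = 0 := Nat.eq_zero_of_not_pos hcard
      simp only [if_neg hcard]
      have heq0 : (fun ω => (∏ i, if s (H i ω) = b i then (1:ℝ) else 0) * (m - 0) ^ 2)
          = fun ω => (∏ q, χf (b q) (H q ω) * gf 0 (X q ω, Y q ω)) * m ^ 2 := by
        funext ω
        simp only [hχf, hgf, pow_zero, mul_one, sub_zero]
      have hpr := hprod b (fun _ => 0) (fun _ => by norm_num)
      constructor
      · rw [heq0]
        exact hpr.1.mul_const _
      · rw [heq0, integral_mul_const, hpr.2]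
        have : (∏ q, ((if b q = true then p else 1 - p) * ∫ ω, gf 0 (X 0 ω, Y 0 ω) ∂μ))
            = p ^ S.card * (1 - p) ^ (n - S.card) := by
          have hg0 : (∫ ω, gf 0 (X 0 ω, Y 0 ω) ∂μ) = 1 := by
            simpa only [hgf] using hψ0
          rw [Finset.prod_congr rfl (fun q _ => by rw [hg0, mul_one]), hP b, ← hcardeq]
        rw [this]
  -- the pointwise decomposition
  have hpoint : ∀ ω, (m - est ω) ^ 2
      = ∑ b : Fin n → Bool, (∏ i, if s (H i ω) = b i then (1:ℝ) else 0) *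
          (m - (if 0 < (Finset.univ.filter fun i => b i = true).card then
            (1 / ((Finset.univ.filter fun i => b i = true).card : ℝ)) *
              ∑ i ∈ Finset.univ.filter (fun i => b i = true), ζ (X i ω, Y i ω)
            else 0)) ^ 2 := by
    intro ω
    have h1 : ∀ b : Fin n → Bool, (∏ i, if s (H i ω) = b i then (1:ℝ) else 0)
        = if (fun i => s (H i ω)) = b then 1 else 0 := by
      intro b
      by_cases hb : (fun i => s (H i ω)) = b
      · rw [if_pos hb, Finset.prod_boole, if_pos]
        intro i _
        exact congrFun hb i
      · rw [if_neg hb, Finset.prod_boole, if_neg]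
        intro hall
        exact hb (funext fun i => hall i (Finset.mem_univ i))
    have h2 : ∀ b : Fin n → Bool,
        (∏ i, if s (H i ω) = b i then (1:ℝ) else 0) *
          (m - (if 0 < (Finset.univ.filter fun i => b i = true).card then
            (1 / ((Finset.univ.filter fun i => b i = true).card : ℝ)) *
              ∑ i ∈ Finset.univ.filter (fun i => b i = true), ζ (X i ω, Y i ω)
            else 0)) ^ 2
        = if (fun i => s (H i ω)) = b then
            (m - (if 0 < (Finset.univ.filter fun i => b i = true).card then
              (1 / ((Finset.univ.filter fun i => b i = true).card : ℝ)) *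
                ∑ i ∈ Finset.univ.filter (fun i => b i = true), ζ (X i ω, Y i ω)
              else 0)) ^ 2 else 0 := by
      intro b
      rw [h1 b, ite_mul, one_mul, zero_mul]
    rw [Finset.sum_congr rfl fun b _ => h2 b, Finset.sum_ite_eq, if_pos (Finset.mem_univ _)]
    rw [hest ω]
    simp only [Finset.sum_filter]
  constructor
  · have heqf : (fun ω => (m - est ω) ^ 2)
        = fun ω => ∑ b : Fin n → Bool, (∏ i, if s (H i ω) = b i then (1:ℝ) else 0) *
            (m - (if 0 < (Finset.univ.filter fun i => b i = true).card then
              (1 / ((Finset.univ.filter fun i => b i = true).card : ℝ)) *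
                ∑ i ∈ Finset.univ.filter (fun i => b i = true), ζ (X i ω, Y i ω)
              else 0)) ^ 2 := funext hpoint
    rw [heqf]
    exact integrable_finset_sum _ (fun b _ => (hterm b _ rfl).1)
  · have h2 : (∫ ω, (m - est ω) ^ 2 ∂μ)
        = ∑ b : Fin n → Bool,
            p ^ (Finset.univ.filter fun i => b i = true).card
              * (1 - p) ^ (n - (Finset.univ.filter fun i => b i = true).card)
              * (if 0 < (Finset.univ.filter fun i => b i = true).card
                 then Var * (1 / ((Finset.univ.filter fun i => b i = true).card : ℝ))
                 else m ^ 2) := by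
      rw [integral_congr_ae (ae_of_all _ hpoint),
        integral_finset_sum _ (fun b _ => (hterm b _ rfl).1)]
      exact Finset.sum_congr rfl fun b _ => (hterm b _ rfl).2
    rw [h2]
    refine le_trans (le_of_eq (aux_sum_bool
      (fun j => p ^ j * (1 - p) ^ (n - j) *
        (if 0 < j then Var * (1 / (j : ℝ)) else m ^ 2)))) ?_
    have h1p0 : (0:ℝ) ≤ 1 - p := by linarith
    have hbound : ∀ j ∈ Finset.range (n + 1),
        (n.choose j : ℝ) * (p ^ j * (1 - p) ^ (n - j) *
            (if 0 < j then Var * (1 / (j : ℝ)) else m ^ 2))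
          ≤ (if j = 0 then (1 - π) ^ n * m ^ 2 else 0)
            + I2 * ((n.choose j : ℝ) *
              (if 0 < j then p ^ j * (1 - p) ^ (n - j) * (1 / (j:ℝ)) else 0)) := by
      intro j _
      rcases Nat.eq_zero_or_pos j with rfl | hjpos
      · have hpow : (1 - p) ^ n ≤ (1 - π) ^ n :=
          pow_le_pow_left₀ h1p0 (by linarith) n
        rw [if_pos rfl, if_neg (lt_irrefl 0), if_neg (lt_irrefl 0)]
        simp only [Nat.choose_zero_right, Nat.cast_one, one_mul, pow_zero,
          Nat.sub_zero, mul_zero, add_zero]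
        exact mul_le_mul_of_nonneg_right hpow (sq_nonneg m)
      · rw [if_neg (Nat.pos_iff_ne_zero.mp hjpos), if_pos hjpos, if_pos hjpos, zero_add]
        have hbase : (0:ℝ) ≤ (n.choose j : ℝ) * (p ^ j * (1 - p) ^ (n - j) * (1 / (j:ℝ))) :=
          mul_nonneg (Nat.cast_nonneg _) (mul_nonneg
            (mul_nonneg (pow_nonneg hppos.le _) (pow_nonneg h1p0 _)) (by positivity))
        calc (n.choose j : ℝ) * (p ^ j * (1 - p) ^ (n - j) * (Var * (1 / (j:ℝ))))
            = Var * ((n.choose j : ℝ) * (p ^ j * (1 - p) ^ (n - j) * (1 / (j:ℝ)))) := by ring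
          _ ≤ I2 * ((n.choose j : ℝ) * (p ^ j * (1 - p) ^ (n - j) * (1 / (j:ℝ)))) :=
              mul_le_mul_of_nonneg_right hVarle hbase
          _ = I2 * ((n.choose j : ℝ) * (p ^ j * (1 - p) ^ (n - j) * (1 / (j:ℝ)))) := rfl
    refine le_trans (Finset.sum_le_sum hbound) ?_
    rw [Finset.sum_add_distrib]
    have hA : (∑ j ∈ Finset.range (n + 1), if j = 0 then (1 - π) ^ n * m ^ 2 else 0)
        = (1 - π) ^ n * m ^ 2 := by
      rw [Finset.sum_ite_eq' (Finset.range (n + 1)) 0]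
      simp
    have hB : (∑ j ∈ Finset.range (n + 1), I2 * ((n.choose j : ℝ) *
          (if 0 < j then p ^ j * (1 - p) ^ (n - j) * (1 / (j:ℝ)) else 0)))
        = I2 * ∑ j ∈ Finset.range (n + 1), ((n.choose j : ℝ) *
          (if 0 < j then p ^ j * (1 - p) ^ (n - j) * (1 / (j:ℝ)) else 0)) :=
      (Finset.mul_sum _ _ _).symm
    rw [hA, hB]
    have hbin := aux_binom (Nat.pos_of_ne_zero (NeZero.ne n)) hπpos hπp h1p
    have : I2 * (∑ j ∈ Finset.range (n + 1), ((n.choose j : ℝ) *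
          (if 0 < j then p ^ j * (1 - p) ^ (n - j) * (1 / (j:ℝ)) else 0)))
        ≤ I2 * (2 / ((n : ℝ) * π)) := mul_le_mul_of_nonneg_left hbin hI20
    have hcomm : I2 * (2 / ((n : ℝ) * π)) = 2 / ((n : ℝ) * π) * I2 := mul_comm _ _
    linarith

/-- finite-sample moment bounds for the component-wise estimators:
`E‖Σ − Σ̂ᶜʷ‖_F² ≤ (1−π)ⁿ Tr(Σ²) + (2/(nπ)) E‖X‖₂⁴` and
`E‖γ − γ̂ᶜʷ‖₂² ≤ (1−π)ⁿ ‖γ‖₂² + (2/(nπ)) E[Y²‖X‖₂²]`. -/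
theorem stmt6
    {Ω : Type*} [MeasurableSpace Ω] (μ : Measure Ω) [IsProbabilityMeasure μ]
    {d K n : ℕ} [NeZero n] (hd : 0 < d)
    (obs : Fin K → Finset (Fin d))
    (H : Fin n → Ω → Fin K) (X : Fin n → Ω → Fin d → ℝ) (Y : Fin n → Ω → ℝ)
    (hHmeas : ∀ i, Measurable (H i))
    (hXmeas : ∀ i j, Measurable fun ω => X i ω j)
    (hYmeas : ∀ i, Measurable (Y i))
    -- i.i.d. samples
    (hiid : iIndepFun
      (fun i ω => (H i ω, X i ω, Y i ω)) μ)
    (hident : ∀ i, μ.map (fun ω => (H i ω, X i ω, Y i ω))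
      = μ.map (fun ω => (H 0 ω, X 0 ω, Y 0 ω)))
    -- MCAR: client index independent of the data
    (hMCAR : ∀ i, IndepFun (H i) (fun ω => (X i ω, Y i ω)) μ)
    -- moment assumption M² = max(E‖X‖₂⁴, E[Y²‖X‖₂²]) < ∞
    (hX4 : Integrable (fun ω => (∑ j, X 0 ω j ^ 2) ^ 2) μ)
    (hY2X2 : Integrable (fun ω => Y 0 ω ^ 2 * ∑ j, X 0 ω j ^ 2) μ)
    -- observation masks
    (M : Fin n → Ω → Fin d → ℝ)
    (hM : ∀ i ω j, M i ω j = if j ∈ obs (H i ω) then (1 : ℝ) else 0)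
    -- population moments and co-observation matrix
    (Sig : Matrix (Fin d) (Fin d) ℝ)
    (hSig : ∀ l j, Sig l j = ∫ ω, X 0 ω l * X 0 ω j ∂μ)
    (gam : Fin d → ℝ) (hgam : ∀ j, gam j = ∫ ω, X 0 ω j * Y 0 ω ∂μ)
    (Pi : Matrix (Fin d) (Fin d) ℝ)
    (hPi : ∀ l j, Pi l j = ∫ ω, M 0 ω l * M 0 ω j ∂μ)
    (π : ℝ) (hπdef : π = ⨅ l : Fin d, ⨅ j : Fin d, Pi l j) (hπpos : 0 < π)
    -- co-observation counts and component-wise estimators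
    (N : Ω → Fin d → Fin d → ℕ)
    (hN : ∀ ω l j, N ω l j
      = (Finset.univ.filter fun i : Fin n =>
          l ∈ obs (H i ω) ∧ j ∈ obs (H i ω)).card)
    (Sigcw : Ω → Matrix (Fin d) (Fin d) ℝ)
    (hSigcw : ∀ ω l j, Sigcw ω l j
      = if 0 < N ω l j then
          (1 / (N ω l j : ℝ)) * ∑ i, M i ω l * M i ω j * X i ω l * X i ω j
        else 0)
    (gamcw : Ω → Fin d → ℝ)
    (hgamcw : ∀ ω j, gamcw ω j
      = if 0 < N ω j j then (1 / (N ω j j : ℝ)) * ∑ i, M i ω j * X i ω j * Y i ω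
        else 0) :
    (∫ ω, ∑ l, ∑ j, (Sig l j - Sigcw ω l j) ^ 2 ∂μ
      ≤ (1 - π) ^ n * Matrix.trace (Sig * Sig)
        + (2 / (n * π)) * ∫ ω, (∑ j, X 0 ω j ^ 2) ^ 2 ∂μ) ∧
    (∫ ω, ∑ j, (gam j - gamcw ω j) ^ 2 ∂μ
      ≤ (1 - π) ^ n * (∑ j, gam j ^ 2)
        + (2 / (n * π)) * ∫ ω, Y 0 ω ^ 2 * ∑ j, X 0 ω j ^ 2 ∂μ) := by
  
  classical
  have hne : Nonempty (Fin d) := ⟨⟨0, hd⟩⟩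
  have hπle : ∀ l j : Fin d, π ≤ Pi l j := by
    intro l j
    rw [hπdef]
    calc (⨅ l' : Fin d, ⨅ j' : Fin d, Pi l' j')
        ≤ ⨅ j' : Fin d, Pi l j' := ciInf_le (Finite.bddBelow_range _) l
      _ ≤ Pi l j := ciInf_le (Finite.bddBelow_range _) j
  -- integrability of the second moments
  have hXp2int : ∀ l j : Fin d, Integrable (fun ω => (X 0 ω l * X 0 ω j) ^ 2) μ := by
    intro l j
    refine Integrable.mono' hX4
      ((((hXmeas 0 l).mul (hXmeas 0 j)).pow_const 2).aestronglyMeasurable)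
      (ae_of_all _ fun ω => ?_)
    have h1 : X 0 ω l ^ 2 ≤ ∑ j', X 0 ω j' ^ 2 :=
      Finset.single_le_sum (f := fun j' => X 0 ω j' ^ 2)
        (fun i _ => sq_nonneg _) (Finset.mem_univ l)
    have h2 : X 0 ω j ^ 2 ≤ ∑ j', X 0 ω j' ^ 2 :=
      Finset.single_le_sum (f := fun j' => X 0 ω j' ^ 2)
        (fun i _ => sq_nonneg _) (Finset.mem_univ j)
    have h0 : (0:ℝ) ≤ ∑ j', X 0 ω j' ^ 2 := Finset.sum_nonneg fun _ _ => sq_nonneg _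
    rw [Real.norm_eq_abs, abs_of_nonneg (sq_nonneg _)]
    calc (X 0 ω l * X 0 ω j) ^ 2 = X 0 ω l ^ 2 * X 0 ω j ^ 2 := by ring
      _ ≤ (∑ j', X 0 ω j' ^ 2) * (∑ j', X 0 ω j' ^ 2) :=
          mul_le_mul h1 h2 (sq_nonneg _) h0
      _ = (∑ j', X 0 ω j' ^ 2) ^ 2 := (sq _).symm
  have hYXint : ∀ j : Fin d, Integrable (fun ω => (X 0 ω j * Y 0 ω) ^ 2) μ := by
    intro j
    refine Integrable.mono' hY2X2
      ((((hXmeas 0 j).mul (hYmeas 0)).pow_const 2).aestronglyMeasurable)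
      (ae_of_all _ fun ω => ?_)
    have h1 : X 0 ω j ^ 2 ≤ ∑ j', X 0 ω j' ^ 2 :=
      Finset.single_le_sum (f := fun j' => X 0 ω j' ^ 2)
        (fun i _ => sq_nonneg _) (Finset.mem_univ j)
    rw [Real.norm_eq_abs, abs_of_nonneg (sq_nonneg _)]
    calc (X 0 ω j * Y 0 ω) ^ 2 = Y 0 ω ^ 2 * X 0 ω j ^ 2 := by ring
      _ ≤ Y 0 ω ^ 2 * ∑ j', X 0 ω j' ^ 2 :=
          mul_le_mul_of_nonneg_left h1 (sq_nonneg _)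
  -- the per-pair application of keylem (covariance part)
  have hpair : ∀ l j : Fin d,
      Integrable (fun ω => (Sig l j - Sigcw ω l j) ^ 2) μ ∧
      ∫ ω, (Sig l j - Sigcw ω l j) ^ 2 ∂μ
        ≤ (1 - π) ^ n * (Sig l j) ^ 2
          + 2 / ((n : ℝ) * π) * ∫ ω, (X 0 ω l * X 0 ω j) ^ 2 ∂μ := by
    intro l j
    have hfil : ∀ ω, (Finset.univ.filter fun i : Fin n =>
        (fun h => decide (l ∈ obs h ∧ j ∈ obs h)) (H i ω) = true)
        = Finset.univ.filter fun i : Fin n => l ∈ obs (H i ω) ∧ j ∈ obs (H i ω) :=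
      fun ω => Finset.filter_congr fun i _ => by simp
    have hest : ∀ ω, Sigcw ω l j =
        if 0 < (Finset.univ.filter fun i : Fin n =>
            (fun h => decide (l ∈ obs h ∧ j ∈ obs h)) (H i ω) = true).card then
          (1 / ((Finset.univ.filter fun i : Fin n =>
              (fun h => decide (l ∈ obs h ∧ j ∈ obs h)) (H i ω) = true).card : ℝ)) *
            ∑ i, (if (fun h => decide (l ∈ obs h ∧ j ∈ obs h)) (H i ω) = true
              then (fun t : (Fin d → ℝ) × ℝ => t.1 l * t.1 j) (X i ω, Y i ω) else 0)
        else 0 := by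
      intro ω
      have hsum : (∑ i, M i ω l * M i ω j * X i ω l * X i ω j)
          = ∑ i, (if (fun h => decide (l ∈ obs h ∧ j ∈ obs h)) (H i ω) = true
              then (fun t : (Fin d → ℝ) × ℝ => t.1 l * t.1 j) (X i ω, Y i ω) else 0) := by
        refine Finset.sum_congr rfl fun i _ => ?_
        rw [hM, hM]
        by_cases h1 : l ∈ obs (H i ω) <;> by_cases h2 : j ∈ obs (H i ω) <;>
          simp [h1, h2]
      rw [hSigcw ω l j, hN ω l j, hfil ω, hsum]
    have hp' : Pi l j = ∫ ω,
        (if (fun h => decide (l ∈ obs h ∧ j ∈ obs h)) (H 0 ω) = true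
          then (1:ℝ) else 0) ∂μ := by
      rw [hPi l j]
      refine integral_congr_ae (ae_of_all _ fun ω => ?_)
      show M 0 ω l * M 0 ω j
        = if (fun h => decide (l ∈ obs h ∧ j ∈ obs h)) (H 0 ω) = true then (1:ℝ) else 0
      rw [hM, hM]
      by_cases h1 : l ∈ obs (H 0 ω) <;> by_cases h2 : j ∈ obs (H 0 ω) <;>
        simp [h1, h2]
    exact keylem μ H X Y hHmeas hXmeas hYmeas hiid hident hMCAR
      (fun h => decide (l ∈ obs h ∧ j ∈ obs h))
      (fun t => t.1 l * t.1 j)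
      (((measurable_pi_apply l).comp measurable_fst).mul
        ((measurable_pi_apply j).comp measurable_fst))
      (hXp2int l j) (Sig l j) (Pi l j) π (hSig l j) hp' (hπle l j) hπpos
      (fun ω => Sigcw ω l j) hest
  -- the per-coordinate application of keylem (gamma part)
  have hgpair : ∀ j : Fin d,
      Integrable (fun ω => (gam j - gamcw ω j) ^ 2) μ ∧
      ∫ ω, (gam j - gamcw ω j) ^ 2 ∂μ
        ≤ (1 - π) ^ n * (gam j) ^ 2
          + 2 / ((n : ℝ) * π) * ∫ ω, (X 0 ω j * Y 0 ω) ^ 2 ∂μ := by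
    intro j
    have hfil : ∀ ω, (Finset.univ.filter fun i : Fin n =>
        (fun h => decide (j ∈ obs h)) (H i ω) = true)
        = Finset.univ.filter fun i : Fin n => j ∈ obs (H i ω) ∧ j ∈ obs (H i ω) :=
      fun ω => Finset.filter_congr fun i _ => by simp
    have hest : ∀ ω, gamcw ω j =
        if 0 < (Finset.univ.filter fun i : Fin n =>
            (fun h => decide (j ∈ obs h)) (H i ω) = true).card then
          (1 / ((Finset.univ.filter fun i : Fin n =>
              (fun h => decide (j ∈ obs h)) (H i ω) = true).card : ℝ)) *
            ∑ i, (if (fun h => decide (j ∈ obs h)) (H i ω) = true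
              then (fun t : (Fin d → ℝ) × ℝ => t.1 j * t.2) (X i ω, Y i ω) else 0)
        else 0 := by
      intro ω
      have hsum : (∑ i, M i ω j * X i ω j * Y i ω)
          = ∑ i, (if (fun h => decide (j ∈ obs h)) (H i ω) = true
              then (fun t : (Fin d → ℝ) × ℝ => t.1 j * t.2) (X i ω, Y i ω) else 0) := by
        refine Finset.sum_congr rfl fun i _ => ?_
        rw [hM]
        by_cases h1 : j ∈ obs (H i ω) <;> simp [h1]
      rw [hgamcw ω j, hN ω j j, hfil ω, hsum]
    have hp' : Pi j j = ∫ ω,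
        (if (fun h => decide (j ∈ obs h)) (H 0 ω) = true then (1:ℝ) else 0) ∂μ := by
      rw [hPi j j]
      refine integral_congr_ae (ae_of_all _ fun ω => ?_)
      show M 0 ω j * M 0 ω j
        = if (fun h => decide (j ∈ obs h)) (H 0 ω) = true then (1:ℝ) else 0
      rw [hM]
      by_cases h1 : j ∈ obs (H 0 ω) <;> simp [h1]
    exact keylem μ H X Y hHmeas hXmeas hYmeas hiid hident hMCAR
      (fun h => decide (j ∈ obs h))
      (fun t => t.1 j * t.2)
      (((measurable_pi_apply j).comp measurable_fst).mul measurable_snd)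
      (hYXint j) (gam j) (Pi j j) π (hgam j) hp' (hπle j j) hπpos
      (fun ω => gamcw ω j) hest
  constructor
  · -- covariance part
    have hswap : ∫ ω, ∑ l, ∑ j, (Sig l j - Sigcw ω l j) ^ 2 ∂μ
        = ∑ l, ∑ j, ∫ ω, (Sig l j - Sigcw ω l j) ^ 2 ∂μ := by
      rw [integral_finset_sum _ (fun l _ =>
        integrable_finset_sum _ (fun j _ => (hpair l j).1))]
      exact Finset.sum_congr rfl fun l _ =>
        integral_finset_sum _ (fun j _ => (hpair l j).1)
    rw [hswap]
    have hle : ∑ l, ∑ j, ∫ ω, (Sig l j - Sigcw ω l j) ^ 2 ∂μ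
        ≤ ∑ l, ∑ j, ((1 - π) ^ n * (Sig l j) ^ 2
            + 2 / ((n : ℝ) * π) * ∫ ω, (X 0 ω l * X 0 ω j) ^ 2 ∂μ) :=
      Finset.sum_le_sum fun l _ => Finset.sum_le_sum fun j _ => (hpair l j).2
    refine le_trans hle (le_of_eq ?_)
    have htr : Matrix.trace (Sig * Sig) = ∑ l, ∑ j, (Sig l j) ^ 2 := by
      simp only [Matrix.trace, Matrix.diag, Matrix.mul_apply]
      refine Finset.sum_congr rfl fun l _ => Finset.sum_congr rfl fun j _ => ?_
      have hsymm : Sig j l = Sig l j := by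
        rw [hSig, hSig]
        refine integral_congr_ae (ae_of_all _ fun ω => ?_)
        ring
      rw [hsymm, sq]
    have hX4sum : ∑ l, ∑ j, (∫ ω, (X 0 ω l * X 0 ω j) ^ 2 ∂μ)
        = ∫ ω, (∑ j, X 0 ω j ^ 2) ^ 2 ∂μ := by
      have h1 : ∀ l : Fin d, (∑ j, ∫ ω, (X 0 ω l * X 0 ω j) ^ 2 ∂μ)
          = ∫ ω, ∑ j, (X 0 ω l * X 0 ω j) ^ 2 ∂μ := fun l =>
        (integral_finset_sum _ (fun j _ => hXp2int l j)).symm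
      rw [Finset.sum_congr rfl fun l _ => h1 l,
        ← integral_finset_sum _ (fun l _ =>
          integrable_finset_sum _ (fun j _ => hXp2int l j))]
      refine integral_congr_ae (ae_of_all _ fun ω => ?_)
      show ∑ l, ∑ j, (X 0 ω l * X 0 ω j) ^ 2 = (∑ j, X 0 ω j ^ 2) ^ 2
      rw [sq (∑ j, X 0 ω j ^ 2), Finset.sum_mul_sum]
      exact Finset.sum_congr rfl fun l _ => Finset.sum_congr rfl fun j _ => by ring
    rw [htr, Finset.mul_sum]
    rw [show (2 / ((n:ℝ) * π)) * ∫ ω, (∑ j, X 0 ω j ^ 2) ^ 2 ∂μ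
        = 2 / ((n:ℝ) * π) * ∑ l, ∑ j, (∫ ω, (X 0 ω l * X 0 ω j) ^ 2 ∂μ) by
      rw [hX4sum]]
    rw [Finset.mul_sum]
    rw [← Finset.sum_add_distrib]
    refine Finset.sum_congr rfl fun l _ => ?_
    rw [Finset.mul_sum, Finset.mul_sum, ← Finset.sum_add_distrib]
  · -- gamma part
    have hswap : ∫ ω, ∑ j, (gam j - gamcw ω j) ^ 2 ∂μ
        = ∑ j, ∫ ω, (gam j - gamcw ω j) ^ 2 ∂μ :=
      integral_finset_sum _ (fun j _ => (hgpair j).1)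
    rw [hswap]
    have hle : ∑ j, ∫ ω, (gam j - gamcw ω j) ^ 2 ∂μ
        ≤ ∑ j, ((1 - π) ^ n * (gam j) ^ 2
            + 2 / ((n : ℝ) * π) * ∫ ω, (X 0 ω j * Y 0 ω) ^ 2 ∂μ) :=
      Finset.sum_le_sum fun j _ => (hgpair j).2
    refine le_trans hle (le_of_eq ?_)
    have hYsum : ∑ j, (∫ ω, (X 0 ω j * Y 0 ω) ^ 2 ∂μ)
        = ∫ ω, Y 0 ω ^ 2 * ∑ j, X 0 ω j ^ 2 ∂μ := by
      rw [← integral_finset_sum _ (fun j _ => hYXint j)]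
      refine integral_congr_ae (ae_of_all _ fun ω => ?_)
      show ∑ j, (X 0 ω j * Y 0 ω) ^ 2 = Y 0 ω ^ 2 * ∑ j, X 0 ω j ^ 2
      rw [Finset.mul_sum]
      exact Finset.sum_congr rfl fun j _ => by ring
    rw [Finset.mul_sum, ← hYsum, Finset.mul_sum, ← Finset.sum_add_distrib]
end

section
/- Under the MCAR assumption H ⟂ (X,Y) and invertibility of each Σ_{obs(k)}, the optimal linear imputation achieves the optimal linear risk: inf_{θ ∈ ℝ^d} E[(Y − θ^⊤ X̃)²] = Σ_{k=1}^K ρ_k · min_{θ^{(k)} ∈ ℝ^{|obs(k)|}} E[(Y − (θ^{(k)})^⊤ X_{obs(k)})²], where X̃ := φ^{opt}(X_{obs(H)}, H) and ρ_k := P(H = k); moreover the infimum on the left is attained at θ_*. -/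
open MeasureTheory ProbabilityTheory Matrix


section Aux
variable {Ω : Type*} [MeasurableSpace Ω] {μ : Measure Ω}

lemma aux_int_mul {f g : Ω → ℝ} (hf : MemLp f 2 μ) (hg : MemLp g 2 μ) :
    Integrable (fun ω => f ω * g ω) μ := by
  have h : MemLp (f • g) 1 μ := hg.smul hf
  exact memLp_one_iff_integrable.mp h

lemma aux_memL2_sum {ι : Type*} [Fintype ι] {Z : ι → Ω → ℝ} (hZ : ∀ i, MemLp (Z i) 2 μ)
    (c : ι → ℝ) : MemLp (fun ω => ∑ i, c i * Z i ω) 2 μ :=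
  memLp_finset_sum Finset.univ (fun i _ => (hZ i).const_mul (c i))

lemma aux_leastSquares {ι : Type*} [Fintype ι] (Z : ι → Ω → ℝ) (Yv : Ω → ℝ)
    (hZ : ∀ i, MemLp (Z i) 2 μ) (hY : MemLp Yv 2 μ)
    (βs : ι → ℝ)
    (horth : ∀ j, ∫ ω, (Yv ω - ∑ i, βs i * Z i ω) * Z j ω ∂μ = 0)
    (β : ι → ℝ) :
    ∫ ω, (Yv ω - ∑ i, βs i * Z i ω) ^ 2 ∂μ ≤ ∫ ω, (Yv ω - ∑ i, β i * Z i ω) ^ 2 ∂μ := by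
  set R : Ω → ℝ := fun ω => Yv ω - ∑ i, βs i * Z i ω with hR
  set D : Ω → ℝ := fun ω => ∑ i, (βs i - β i) * Z i ω with hD
  have hR2 : MemLp R 2 μ := hY.sub (aux_memL2_sum hZ βs)
  have hD2 : MemLp D 2 μ := aux_memL2_sum hZ (fun i => βs i - β i)
  have hRD : Integrable (fun ω => R ω * D ω) μ := aux_int_mul hR2 hD2
  have hRR : Integrable (fun ω => R ω ^ 2) μ := hR2.integrable_sq
  have hDD : Integrable (fun ω => D ω ^ 2) μ := hD2.integrable_sq
  have hptw : ∀ ω, (Yv ω - ∑ i, β i * Z i ω) ^ 2 = R ω ^ 2 + (2 * (R ω * D ω) + D ω ^ 2) := by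
    intro ω
    have hsum : ∑ i, (βs i - β i) * Z i ω = ∑ i, βs i * Z i ω - ∑ i, β i * Z i ω := by
      rw [← Finset.sum_sub_distrib]
      exact Finset.sum_congr rfl fun i _ => (sub_mul _ _ _)
    have : Yv ω - ∑ i, β i * Z i ω = R ω + D ω := by
      rw [hR, hD]; dsimp only; rw [hsum]; ring
    rw [this]; ring
  have key : ∫ ω, (Yv ω - ∑ i, β i * Z i ω) ^ 2 ∂μ
      = ∫ ω, R ω ^ 2 ∂μ + (2 * ∫ ω, R ω * D ω ∂μ + ∫ ω, D ω ^ 2 ∂μ) := by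
    calc ∫ ω, (Yv ω - ∑ i, β i * Z i ω) ^ 2 ∂μ
        = ∫ ω, (R ω ^ 2 + (2 * (R ω * D ω) + D ω ^ 2)) ∂μ :=
          integral_congr_ae (Filter.Eventually.of_forall fun ω => hptw ω)
      _ = ∫ ω, R ω ^ 2 ∂μ + ∫ ω, (2 * (R ω * D ω) + D ω ^ 2) ∂μ :=
          integral_add hRR ((hRD.const_mul 2).add hDD)
      _ = ∫ ω, R ω ^ 2 ∂μ + (∫ ω, 2 * (R ω * D ω) ∂μ + ∫ ω, D ω ^ 2 ∂μ) := by
          rw [integral_add (hRD.const_mul 2) hDD]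
      _ = ∫ ω, R ω ^ 2 ∂μ + (2 * ∫ ω, R ω * D ω ∂μ + ∫ ω, D ω ^ 2 ∂μ) := by
          rw [integral_const_mul]
  have hzero : ∫ ω, R ω * D ω ∂μ = 0 := by
    have hptw2 : ∀ ω, R ω * D ω = ∑ j, (βs j - β j) * (R ω * Z j ω) := by
      intro ω; rw [hD]; dsimp only; rw [Finset.mul_sum]
      exact Finset.sum_congr rfl fun j _ => by ring
    calc ∫ ω, R ω * D ω ∂μ
        = ∫ ω, ∑ j, (βs j - β j) * (R ω * Z j ω) ∂μ :=
          integral_congr_ae (Filter.Eventually.of_forall hptw2)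
      _ = ∑ j, ∫ ω, (βs j - β j) * (R ω * Z j ω) ∂μ :=
          integral_finset_sum _ (fun j _ => (aux_int_mul hR2 (hZ j)).const_mul _)
      _ = ∑ j, (βs j - β j) * ∫ ω, R ω * Z j ω ∂μ := by
          exact Finset.sum_congr rfl fun j _ => integral_const_mul _ _
      _ = 0 := by simp [hR, horth]
  have hDnn : 0 ≤ ∫ ω, D ω ^ 2 ∂μ := integral_nonneg fun ω => sq_nonneg _
  rw [key, hzero]
  linarith

lemma aux_indicator_integral {K : ℕ} (H : Ω → Fin K) (W : Ω → ℝ)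
    (hHmeas : Measurable H)
    (hInd : IndepFun H W μ) (hW : AEStronglyMeasurable W μ) (k : Fin K) :
    ∫ ω, Set.indicator (H ⁻¹' {k}) W ω ∂μ = (μ (H ⁻¹' {k})).toReal * ∫ ω, W ω ∂μ := by
  classical
  have hφ : Measurable (fun h : Fin K => if h = k then (1 : ℝ) else 0) :=
    measurable_of_countable _
  have hInd2 : IndepFun (fun ω => if H ω = k then (1 : ℝ) else 0) W μ :=
    hInd.comp hφ measurable_id
  have h1 : ((fun ω => if H ω = k then (1 : ℝ) else 0) * W)
      = Set.indicator (H ⁻¹' {k}) W := by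
    funext ω; by_cases h : H ω = k <;> simp [Set.indicator, h]
  have h2 := hInd2.integral_mul_eq_mul_integral
    ((hφ.comp hHmeas).aestronglyMeasurable) hW
  rw [h1] at h2
  rw [h2]
  congr 1
  have h3 : (fun ω => if H ω = k then (1 : ℝ) else 0)
      = Set.indicator (H ⁻¹' {k}) (fun _ => (1 : ℝ)) := by
    funext ω; by_cases h : H ω = k <;> simp [Set.indicator, h]
  rw [show integral μ (fun ω => if H ω = k then (1 : ℝ) else 0)
      = ∫ ω, Set.indicator (H ⁻¹' {k}) (fun _ => (1 : ℝ)) ω ∂μ from by rw [h3]]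
  rw [integral_indicator_const (1 : ℝ) (hHmeas (measurableSet_singleton k))]
  simp [Measure.real]

end Aux
noncomputable def impMat {d : ℕ} (Sig : Matrix (Fin d) (Fin d) ℝ) (s : Finset (Fin d)) :
    Matrix ↥(sᶜ) ↥s ℝ :=
  Sig.submatrix (Subtype.val : ↥(sᶜ) → Fin d) (Subtype.val : ↥s → Fin d) *
    (Sig.submatrix (Subtype.val : ↥s → Fin d) (Subtype.val : ↥s → Fin d))⁻¹

noncomputable def bvec {d : ℕ} (Sig : Matrix (Fin d) (Fin d) ℝ) (s : Finset (Fin d))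
    (θ : Fin d → ℝ) : ↥s → ℝ :=
  fun l => θ l + ∑ j : ↥(sᶜ), θ j * impMat Sig s j l

/-- the optimal linear imputation achieves the optimal linear risk:
`inf_θ E[(Y − θ⊤X̃)²] = Σ_k ρ_k min_{θ⁽ᵏ⁾} E[(Y − θ⁽ᵏ⁾⊤X_{obs(k)})²]`, and the
left infimum is attained at `θ_*`. -/
theorem stmt8
    {Ω : Type*} [MeasurableSpace Ω] (μ : Measure Ω) [IsProbabilityMeasure μ]
    {d K : ℕ}
    (obs : Fin K → Finset (Fin d))
    (H : Ω → Fin K) (X : Ω → Fin d → ℝ) (Y : Ω → ℝ)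
    (hHmeas : Measurable H)
    (hXmeas : ∀ j, Measurable fun ω => X ω j) (hYmeas : Measurable Y)
    (hX2 : ∀ j, MemLp (fun ω => X ω j) 2 μ) (hY2 : MemLp Y 2 μ)
    -- MCAR: client index independent of the data
    (hMCAR : IndepFun H (fun ω => (X ω, Y ω)) μ)
    -- population moments
    (Sig : Matrix (Fin d) (Fin d) ℝ)
    (hSig : ∀ l j, Sig l j = ∫ ω, X ω l * X ω j ∂μ)
    (gam : Fin d → ℝ) (hgam : ∀ j, gam j = ∫ ω, X ω j * Y ω ∂μ)
    (hSigInv : IsUnit Sig.det)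
    (hSobsInv : ∀ k, IsUnit (Sig.submatrix (Subtype.val : ↥(obs k) → Fin d)
      (Subtype.val : ↥(obs k) → Fin d)).det)
    (θstar : Fin d → ℝ) (hθstar : θstar = Sig⁻¹ *ᵥ gam)
    -- the optimally imputed covariate vector X̃ = φ^opt(X_obs(H), H)
    (tilde : Ω → Fin d → ℝ)
    (htilde : ∀ ω j, tilde ω j =
      if h : j ∈ obs (H ω) then X ω j
      else
        ((Sig.submatrix (Subtype.val : ↥((obs (H ω))ᶜ) → Fin d)
            (Subtype.val : ↥(obs (H ω)) → Fin d)
          * (Sig.submatrix (Subtype.val : ↥(obs (H ω)) → Fin d)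
              (Subtype.val : ↥(obs (H ω)) → Fin d))⁻¹)
          *ᵥ (fun l : ↥(obs (H ω)) => X ω l)) ⟨j, Finset.mem_compl.mpr h⟩) :
    (⨅ θ : Fin d → ℝ, ∫ ω, (Y ω - ∑ j, θ j * tilde ω j) ^ 2 ∂μ)
      = ∑ k : Fin K, (μ (H ⁻¹' {k})).toReal
          * (⨅ θk : ↥(obs k) → ℝ, ∫ ω, (Y ω - ∑ j : ↥(obs k), θk j * X ω j) ^ 2 ∂μ) ∧
    (∫ ω, (Y ω - ∑ j, θstar j * tilde ω j) ^ 2 ∂μ)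
      = ⨅ θ : Fin d → ℝ, ∫ ω, (Y ω - ∑ j, θ j * tilde ω j) ^ 2 ∂μ := by
  classical
  -- basic facts
  have hSymm : ∀ l j, Sig l j = Sig j l := by
    intro l j; rw [hSig l j, hSig j l]
    exact integral_congr_ae (Filter.Eventually.of_forall fun ω => mul_comm _ _)
  -- βs : the per-client optimal coefficients
  set βs : ∀ k : Fin K, ↥(obs k) → ℝ := fun k =>
    (Sig.submatrix (Subtype.val : ↥(obs k) → Fin d) (Subtype.val : ↥(obs k) → Fin d))⁻¹
      *ᵥ (fun j : ↥(obs k) => gam j) with hβs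
  -- normal equations for βs
  have hnormal : ∀ (k : Fin K) (j : ↥(obs k)),
      gam (j : Fin d) = ∑ i : ↥(obs k), βs k i * Sig (j : Fin d) (i : Fin d) := by
    intro k j
    have h1 : (Sig.submatrix (Subtype.val : ↥(obs k) → Fin d)
            (Subtype.val : ↥(obs k) → Fin d)) *ᵥ βs k
        = fun j : ↥(obs k) => gam (j : Fin d) := by
      rw [hβs]
      rw [Matrix.mulVec_mulVec, Matrix.mul_nonsing_inv _ (hSobsInv k), Matrix.one_mulVec]
    have h2 := congrFun h1 j
    simp only [Matrix.mulVec, dotProduct, Matrix.submatrix_apply] at h2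
    rw [← h2]
    exact Finset.sum_congr rfl fun i _ => mul_comm _ _
  -- residual square-integrability
  have hRes2 : ∀ (k : Fin K) (β : ↥(obs k) → ℝ),
      MemLp (fun ω => Y ω - ∑ j : ↥(obs k), β j * X ω j) 2 μ := fun k β =>
    hY2.sub (aux_memL2_sum (fun j : ↥(obs k) => hX2 (j : Fin d)) β)
  have hW_int : ∀ (k : Fin K) (β : ↥(obs k) → ℝ),
      Integrable (fun ω => (Y ω - ∑ j : ↥(obs k), β j * X ω j) ^ 2) μ := fun k β =>
    (hRes2 k β).integrable_sq
  -- orthogonality of the optimal residual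
  have horth : ∀ (k : Fin K) (j : ↥(obs k)),
      ∫ ω, (Y ω - ∑ i : ↥(obs k), βs k i * X ω i) * X ω j ∂μ = 0 := by
    intro k j
    have hint1 : Integrable (fun ω => X ω (j : Fin d) * Y ω) μ := aux_int_mul (hX2 _) hY2
    have hint2 : Integrable
        (fun ω => ∑ i : ↥(obs k), βs k i * (X ω (i : Fin d) * X ω (j : Fin d))) μ :=
      integrable_finset_sum _ (fun i _ => (aux_int_mul (hX2 _) (hX2 _)).const_mul _)
    have hptw : ∀ ω, (Y ω - ∑ i : ↥(obs k), βs k i * X ω i) * X ω j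
        = X ω (j : Fin d) * Y ω
          - ∑ i : ↥(obs k), βs k i * (X ω (i : Fin d) * X ω (j : Fin d)) := by
      intro ω
      rw [sub_mul, Finset.sum_mul]
      congr 1
      · exact mul_comm _ _
      · exact Finset.sum_congr rfl fun i _ => by ring
    calc ∫ ω, (Y ω - ∑ i : ↥(obs k), βs k i * X ω i) * X ω j ∂μ
        = ∫ ω, (X ω (j : Fin d) * Y ω
            - ∑ i : ↥(obs k), βs k i * (X ω (i : Fin d) * X ω (j : Fin d))) ∂μ :=
          integral_congr_ae (Filter.Eventually.of_forall hptw)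
      _ = (∫ ω, X ω (j : Fin d) * Y ω ∂μ)
            - ∫ ω, ∑ i : ↥(obs k), βs k i * (X ω (i : Fin d) * X ω (j : Fin d)) ∂μ :=
          integral_sub hint1 hint2
      _ = gam (j : Fin d) - ∑ i : ↥(obs k), βs k i * Sig (i : Fin d) (j : Fin d) := by
          rw [← hgam]
          congr 1
          rw [integral_finset_sum _ (fun i _ => (aux_int_mul (hX2 _) (hX2 _)).const_mul _)]
          exact Finset.sum_congr rfl fun i _ => by
            rw [integral_const_mul, ← hSig]
      _ = 0 := by
          rw [hnormal k j]
          rw [sub_eq_zero]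
          exact Finset.sum_congr rfl fun i _ => by rw [hSymm]
  -- minimality over client-k coefficients
  have hmin : ∀ (k : Fin K) (β : ↥(obs k) → ℝ),
      ∫ ω, (Y ω - ∑ j : ↥(obs k), βs k j * X ω j) ^ 2 ∂μ
        ≤ ∫ ω, (Y ω - ∑ j : ↥(obs k), β j * X ω j) ^ 2 ∂μ := fun k β =>
    aux_leastSquares (fun (j : ↥(obs k)) ω => X ω j) Y
      (fun j => hX2 (j : Fin d)) hY2 (βs k) (horth k) β
  -- the sub-infimum is attained at βs k
  have hInfk : ∀ k : Fin K,
      (⨅ θk : ↥(obs k) → ℝ, ∫ ω, (Y ω - ∑ j : ↥(obs k), θk j * X ω j) ^ 2 ∂μ)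
        = ∫ ω, (Y ω - ∑ j : ↥(obs k), βs k j * X ω j) ^ 2 ∂μ := by
    intro k
    refine le_antisymm (ciInf_le ⟨∫ ω, (Y ω - ∑ j : ↥(obs k), βs k j * X ω j) ^ 2 ∂μ, ?_⟩ (βs k)) (le_ciInf (hmin k))
    rintro x ⟨β, rfl⟩; exact hmin k β
  -- pointwise rewriting of the imputed inner product
  have hpt : ∀ (θ : Fin d → ℝ) (ω : Ω),
      ∑ j, θ j * tilde ω j
        = ∑ l : ↥(obs (H ω)), bvec Sig (obs (H ω)) θ l * X ω l := by
    intro θ ω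
    have e1 : ∑ j, θ j * tilde ω j
        = (∑ j ∈ obs (H ω), θ j * tilde ω j) + ∑ j ∈ (obs (H ω))ᶜ, θ j * tilde ω j :=
      (Finset.sum_add_sum_compl _ _).symm
    have e2 : ∑ j ∈ obs (H ω), θ j * tilde ω j
        = ∑ j : ↥(obs (H ω)), θ (j : Fin d) * X ω (j : Fin d) := by
      rw [← Finset.sum_coe_sort]
      exact Finset.sum_congr rfl fun j _ => by rw [htilde ω (j : Fin d), dif_pos j.2]
    have e3 : ∑ j ∈ (obs (H ω))ᶜ, θ j * tilde ω j
        = ∑ j : ↥((obs (H ω))ᶜ), θ (j : Fin d)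
            * ∑ l : ↥(obs (H ω)), impMat Sig (obs (H ω)) j l * X ω (l : Fin d) := by
      rw [← Finset.sum_coe_sort]
      refine Finset.sum_congr rfl fun j _ => ?_
      congr 1
      have hj : (j : Fin d) ∉ obs (H ω) := Finset.mem_compl.mp j.2
      rw [htilde ω (j : Fin d), dif_neg hj]
      have hje : (⟨(j : Fin d), Finset.mem_compl.mpr hj⟩ : ↥((obs (H ω))ᶜ)) = j :=
        Subtype.ext rfl
      show (impMat Sig (obs (H ω)) *ᵥ fun l : ↥(obs (H ω)) => X ω (l : Fin d))
          ⟨(j : Fin d), Finset.mem_compl.mpr hj⟩ = _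
      rw [hje]
      simp [Matrix.mulVec, dotProduct]
    have e4 : ∑ l : ↥(obs (H ω)), bvec Sig (obs (H ω)) θ l * X ω (l : Fin d)
        = (∑ l : ↥(obs (H ω)), θ (l : Fin d) * X ω (l : Fin d))
          + ∑ j : ↥((obs (H ω))ᶜ), θ (j : Fin d)
              * ∑ l : ↥(obs (H ω)), impMat Sig (obs (H ω)) j l * X ω (l : Fin d) := by
      simp only [bvec, add_mul, Finset.sum_add_distrib]
      congr 1
      simp only [Finset.sum_mul, Finset.mul_sum]
      rw [Finset.sum_comm]
      exact Finset.sum_congr rfl fun j _ =>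
        Finset.sum_congr rfl fun l _ => mul_assoc _ _ _
    rw [e1, e2, e3, e4]
  -- indicator decomposition of the risk integrand
  have hdec : ∀ (θ : Fin d → ℝ) (ω : Ω),
      (Y ω - ∑ j, θ j * tilde ω j) ^ 2
        = ∑ k : Fin K, Set.indicator (H ⁻¹' {k})
            (fun ω' => (Y ω' - ∑ l : ↥(obs k), bvec Sig (obs k) θ l * X ω' l) ^ 2) ω := by
    intro θ ω
    rw [Finset.sum_eq_single (H ω)]
    · rw [Set.indicator_of_mem (show ω ∈ H ⁻¹' {H ω} from rfl), hpt θ ω]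
    · intro k _ hk
      exact Set.indicator_of_notMem (by simp [Ne.symm hk]) _
    · intro h; exact absurd (Finset.mem_univ _) h
  -- integral of each indicator piece factorizes by MCAR
  have hind : ∀ (k : Fin K) (β : ↥(obs k) → ℝ),
      ∫ ω, Set.indicator (H ⁻¹' {k})
          (fun ω' => (Y ω' - ∑ l : ↥(obs k), β l * X ω' l) ^ 2) ω ∂μ
        = (μ (H ⁻¹' {k})).toReal * ∫ ω, (Y ω - ∑ l : ↥(obs k), β l * X ω l) ^ 2 ∂μ := by
    intro k β
    have hψ : Measurable (fun p : (Fin d → ℝ) × ℝ =>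
        (p.2 - ∑ l : ↥(obs k), β l * p.1 l) ^ 2) := by
      apply Measurable.pow_const
      exact measurable_snd.sub (Finset.measurable_sum _ fun l _ =>
        ((measurable_pi_apply (l : Fin d)).comp measurable_fst).const_mul _)
    have hIndW : IndepFun H (fun ω => (Y ω - ∑ l : ↥(obs k), β l * X ω l) ^ 2) μ :=
      hMCAR.comp measurable_id hψ
    exact aux_indicator_integral H _ hHmeas hIndW (hW_int k β).aestronglyMeasurable k
  -- risk formula
  have hG : ∀ θ : Fin d → ℝ,
      ∫ ω, (Y ω - ∑ j, θ j * tilde ω j) ^ 2 ∂μ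
        = ∑ k : Fin K, (μ (H ⁻¹' {k})).toReal
            * ∫ ω, (Y ω - ∑ l : ↥(obs k), bvec Sig (obs k) θ l * X ω l) ^ 2 ∂μ := by
    intro θ
    rw [integral_congr_ae (Filter.Eventually.of_forall (hdec θ)),
      integral_finset_sum _ (fun k _ =>
        (hW_int k (bvec Sig (obs k) θ)).indicator (hHmeas (measurableSet_singleton k)))]
    exact Finset.sum_congr rfl fun k _ => hind k _
  -- b(θ*) equals βs
  have hbstar : ∀ k : Fin K, bvec Sig (obs k) θstar = βs k := by
    intro k
    have hSg : Sig *ᵥ θstar = gam := by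
      rw [hθstar, Matrix.mulVec_mulVec, Matrix.mul_nonsing_inv _ hSigInv, Matrix.one_mulVec]
    have hMS : impMat Sig (obs k)
          * Sig.submatrix (Subtype.val : ↥(obs k) → Fin d) (Subtype.val : ↥(obs k) → Fin d)
        = Sig.submatrix (Subtype.val : ↥((obs k)ᶜ) → Fin d)
            (Subtype.val : ↥(obs k) → Fin d) := by
      rw [impMat, Matrix.mul_assoc, Matrix.nonsing_inv_mul _ (hSobsInv k), Matrix.mul_one]
    have hsecond : ∀ (j : ↥((obs k)ᶜ)) (i : ↥(obs k)),
        ∑ l : ↥(obs k), impMat Sig (obs k) j l * Sig (l : Fin d) (i : Fin d)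
          = Sig (j : Fin d) (i : Fin d) := by
      intro j i
      have h := congrFun (congrFun hMS j) i
      rw [Matrix.mul_apply] at h
      simpa [Matrix.submatrix_apply] using h
    have h1 : (Sig.submatrix (Subtype.val : ↥(obs k) → Fin d)
            (Subtype.val : ↥(obs k) → Fin d))
          *ᵥ bvec Sig (obs k) θstar = fun j : ↥(obs k) => gam (j : Fin d) := by
      funext i
      show ∑ l : ↥(obs k), Sig (i : Fin d) (l : Fin d) * bvec Sig (obs k) θstar l
          = gam (i : Fin d)
      have expand : ∑ l : ↥(obs k), Sig (i : Fin d) (l : Fin d) * bvec Sig (obs k) θstar l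
          = (∑ l : ↥(obs k), Sig (i : Fin d) (l : Fin d) * θstar (l : Fin d))
            + ∑ j : ↥((obs k)ᶜ), θstar (j : Fin d)
                * ∑ l : ↥(obs k), impMat Sig (obs k) j l * Sig (l : Fin d) (i : Fin d) := by
        simp only [bvec, mul_add, Finset.sum_add_distrib]
        congr 1
        simp only [Finset.mul_sum]
        rw [Finset.sum_comm]
        refine Finset.sum_congr rfl fun j _ => Finset.sum_congr rfl fun l _ => ?_
        rw [hSymm (i : Fin d) (l : Fin d)]
        ring
      rw [expand]
      have : (∑ l : ↥(obs k), Sig (i : Fin d) (l : Fin d) * θstar (l : Fin d))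
            + ∑ j : ↥((obs k)ᶜ), θstar (j : Fin d) * Sig (j : Fin d) (i : Fin d)
          = ∑ j : Fin d, Sig (i : Fin d) j * θstar j := by
        rw [← Finset.sum_add_sum_compl (obs k) (fun j => Sig (i : Fin d) j * θstar j),
          ← Finset.sum_coe_sort (obs k), ← Finset.sum_coe_sort ((obs k)ᶜ)]
        congr 1
        exact Finset.sum_congr rfl fun j _ => by rw [hSymm (j : Fin d) (i : Fin d)]; ring
      have e5 : ∑ j : ↥((obs k)ᶜ), θstar (j : Fin d)
            * ∑ l : ↥(obs k), impMat Sig (obs k) j l * Sig (l : Fin d) (i : Fin d)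
          = ∑ j : ↥((obs k)ᶜ), θstar (j : Fin d) * Sig (j : Fin d) (i : Fin d) :=
        Finset.sum_congr rfl fun j _ => by rw [hsecond j i]
      rw [e5, this]
      have := congrFun hSg (i : Fin d)
      simp only [Matrix.mulVec, dotProduct] at this
      rw [this]
    rw [hβs]
    have h2 : (Sig.submatrix (Subtype.val : ↥(obs k) → Fin d)
            (Subtype.val : ↥(obs k) → Fin d))⁻¹
          *ᵥ (fun j : ↥(obs k) => gam (j : Fin d)) = bvec Sig (obs k) θstar := by
      rw [← h1, Matrix.mulVec_mulVec, Matrix.nonsing_inv_mul _ (hSobsInv k),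
        Matrix.one_mulVec]
    exact h2.symm
  -- value at θ*
  have hGstar : ∫ ω, (Y ω - ∑ j, θstar j * tilde ω j) ^ 2 ∂μ
      = ∑ k : Fin K, (μ (H ⁻¹' {k})).toReal
          * ∫ ω, (Y ω - ∑ j : ↥(obs k), βs k j * X ω j) ^ 2 ∂μ := by
    rw [hG θstar]
    exact Finset.sum_congr rfl fun k _ => by rw [hbstar k]
  -- θ* is a global minimizer
  have hle : ∀ θ : Fin d → ℝ,
      ∫ ω, (Y ω - ∑ j, θstar j * tilde ω j) ^ 2 ∂μ
        ≤ ∫ ω, (Y ω - ∑ j, θ j * tilde ω j) ^ 2 ∂μ := by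
    intro θ
    rw [hGstar, hG θ]
    exact Finset.sum_le_sum fun k _ =>
      mul_le_mul_of_nonneg_left (hmin k _) ENNReal.toReal_nonneg
  have hAttain : (⨅ θ : Fin d → ℝ, ∫ ω, (Y ω - ∑ j, θ j * tilde ω j) ^ 2 ∂μ)
      = ∫ ω, (Y ω - ∑ j, θstar j * tilde ω j) ^ 2 ∂μ := by
    refine le_antisymm (ciInf_le ⟨∫ ω, (Y ω - ∑ j, θstar j * tilde ω j) ^ 2 ∂μ, ?_⟩ θstar) (le_ciInf hle)
    rintro x ⟨θ, rfl⟩; exact hle θ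
  constructor
  · rw [hAttain, hGstar]
    exact Finset.sum_congr rfl fun k _ => by rw [hInfk k]
  · exact hAttain.symm
end

section
/- For positive semidefinite matrices A, B ∈ ℝ^{d×d} with A ⪯ B (Loewner order) and any λ > 0, the degrees of freedom are monotone: Tr(A(A + λI_d)^{-1}) ≤ Tr(B(B + λI_d)^{-1}). -/
open Matrix

section Aux

open scoped MatrixOrder

variable {n : Type*} [Fintype n] [DecidableEq n]

lemma aux_trace_nonneg {A : Matrix n n ℝ} (hA : A.PosSemidef) : 0 ≤ A.trace := by
  rw [Matrix.trace]
  refine Finset.sum_nonneg fun i _ => ?_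
  have h := hA.dotProduct_mulVec_nonneg (Pi.single i 1)
  simpa [dotProduct, Matrix.mulVec, Pi.single_apply, Matrix.diag] using h

lemma aux_key {P : Matrix n n ℝ} (hP : P.PosSemidef) (hdet : IsUnit P.det)
    (h1P : (1 - P).PosSemidef) : (P⁻¹ - 1).PosSemidef := by
  have hPinv : P⁻¹.PosSemidef := hP.inv
  set Q := CFC.sqrt P⁻¹ with hQdef
  have hQ : Q.PosSemidef := (CFC.sqrt_nonneg P⁻¹).posSemidef
  have hQQ : Q * Q = P⁻¹ := CFC.sqrt_mul_sqrt_self P⁻¹ hPinv.nonneg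
  have hPinvdet : IsUnit P⁻¹.det := by
    rw [Matrix.det_nonsing_inv, isUnit_ringInverse]
    exact hdet
  have hdetQ : IsUnit Q.det := by
    have h2 : Q.det * Q.det = P⁻¹.det := by rw [← Matrix.det_mul, hQQ]
    exact isUnit_of_mul_isUnit_left (h2 ▸ hPinvdet)
  have hQPQ : Q * (P * Q) = 1 := by
    have h1 : (P * Q) * Q = 1 := by
      rw [Matrix.mul_assoc, hQQ, Matrix.mul_nonsing_inv _ hdet]
    have h2 : Q⁻¹ = P * Q := Matrix.inv_eq_left_inv h1
    rw [← h2, Matrix.mul_nonsing_inv _ hdetQ]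
  have hconj : Q * (1 - P) * Qᴴ = P⁻¹ - 1 := by
    rw [hQ.1, Matrix.mul_sub, Matrix.mul_one, Matrix.sub_mul, hQQ, Matrix.mul_assoc, hQPQ]
  exact hconj ▸ h1P.mul_mul_conjTranspose_same Q

lemma aux_inv_antitone {M N : Matrix n n ℝ} (hM : M.PosDef) (hN : N.PosDef)
    (h : (N - M).PosSemidef) : (M⁻¹ - N⁻¹).PosSemidef := by
  set S := CFC.sqrt N with hSdef
  have hS : S.PosSemidef := (CFC.sqrt_nonneg N).posSemidef
  have hSS : S * S = N := CFC.sqrt_mul_sqrt_self N hN.posSemidef.nonneg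
  have hdetS : IsUnit S.det := by
    have h2 : S.det * S.det = N.det := by rw [← Matrix.det_mul, hSS]
    exact isUnit_of_mul_isUnit_left (h2 ▸ hN.det_pos.ne'.isUnit)
  set T := S⁻¹ with hTdef
  have hTS : T * S = 1 := Matrix.nonsing_inv_mul S hdetS
  have hST : S * T = 1 := Matrix.mul_nonsing_inv S hdetS
  have hTh : Tᴴ = T := by rw [hTdef, Matrix.conjTranspose_nonsing_inv, hS.1]
  set P := T * M * Tᴴ with hPdef
  have hPpsd : P.PosSemidef := hM.posSemidef.mul_mul_conjTranspose_same T
  have hdetT : IsUnit T.det := by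
    rw [hTdef, Matrix.det_nonsing_inv, isUnit_ringInverse]
    exact hdetS
  have hPdet : IsUnit P.det := by
    rw [hPdef, Matrix.det_mul, Matrix.det_mul, Matrix.det_conjTranspose]
    exact (hdetT.mul hM.det_pos.ne'.isUnit).mul (isUnit_star.mpr hdetT)
  have hTNT : T * N * Tᴴ = 1 := by
    rw [hTh, ← hSS, ← Matrix.mul_assoc, Matrix.mul_assoc (T * S), hTS, Matrix.one_mul, hST]
  have h1P : (1 - P).PosSemidef := by
    have hconj : T * (N - M) * Tᴴ = 1 - P := by
      rw [Matrix.mul_sub, Matrix.sub_mul, hTNT, hPdef]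
    exact hconj ▸ h.mul_mul_conjTranspose_same T
  have hkey := aux_key hPpsd hPdet h1P
  have hMinv : M⁻¹ = T * P⁻¹ * Tᴴ := by
    have hMeq : M = S * P * S := by
      rw [hPdef, hTh, ← Matrix.mul_assoc, ← Matrix.mul_assoc, hST, Matrix.one_mul,
        Matrix.mul_assoc, hTS, Matrix.mul_one]
    rw [hMeq, Matrix.mul_inv_rev, Matrix.mul_inv_rev, hTh, ← hTdef, Matrix.mul_assoc]
  have hNinv : N⁻¹ = T * 1 * Tᴴ := by
    rw [← hSS, Matrix.mul_inv_rev, hTh, ← hTdef, Matrix.mul_one]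
  have hconj2 : T * (P⁻¹ - 1) * Tᴴ = M⁻¹ - N⁻¹ := by
    rw [Matrix.mul_sub, Matrix.sub_mul, ← hMinv, ← hNinv]
  exact hconj2 ▸ hkey.mul_mul_conjTranspose_same T

end Aux

/-- monotonicity of degrees of freedom: if `A ⪯ B` (Loewner) for
PSD matrices and `λ > 0`, then `Tr(A(A+λI)⁻¹) ≤ Tr(B(B+λI)⁻¹)`. -/
theorem stmt11
    {d : ℕ} (A B : Matrix (Fin d) (Fin d) ℝ)
    (hA : A.PosSemidef) (hB : B.PosSemidef)
    (hAB : (B - A).PosSemidef)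
    (lam : ℝ) (hlam : 0 < lam) :
    Matrix.trace (A * (A + lam • 1)⁻¹) ≤ Matrix.trace (B * (B + lam • 1)⁻¹) := by
  have hone : (lam • (1 : Matrix (Fin d) (Fin d) ℝ)).PosDef := by
    rw [Matrix.smul_one_eq_diagonal]
    exact Matrix.PosDef.diagonal fun _ => hlam
  have hM : (A + lam • (1 : Matrix (Fin d) (Fin d) ℝ)).PosDef := Matrix.PosDef.posSemidef_add hA hone
  have hN : (B + lam • (1 : Matrix (Fin d) (Fin d) ℝ)).PosDef := Matrix.PosDef.posSemidef_add hB hone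
  set M := A + lam • (1 : Matrix (Fin d) (Fin d) ℝ) with hMdef
  set N := B + lam • (1 : Matrix (Fin d) (Fin d) ℝ) with hNdef
  have hdiff : (N - M).PosSemidef := by
    have : N - M = B - A := by rw [hMdef, hNdef]; abel
    rw [this]; exact hAB
  have hmain := aux_inv_antitone hM hN hdiff
  have hAM : A * M⁻¹ = 1 - lam • M⁻¹ := by
    have hAeq : A = M - lam • (1 : Matrix (Fin d) (Fin d) ℝ) := by rw [hMdef]; abel
    rw [hAeq, Matrix.sub_mul, Matrix.mul_nonsing_inv _ hM.det_pos.ne'.isUnit,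
      Matrix.smul_mul, Matrix.one_mul]
  have hBN : B * N⁻¹ = 1 - lam • N⁻¹ := by
    have hBeq : B = N - lam • (1 : Matrix (Fin d) (Fin d) ℝ) := by rw [hNdef]; abel
    rw [hBeq, Matrix.sub_mul, Matrix.mul_nonsing_inv _ hN.det_pos.ne'.isUnit,
      Matrix.smul_mul, Matrix.one_mul]
  rw [hAM, hBN, Matrix.trace_sub, Matrix.trace_sub, Matrix.trace_smul, Matrix.trace_smul]
  have htr : N⁻¹.trace ≤ M⁻¹.trace := by
    have := aux_trace_nonneg hmain
    rw [Matrix.trace_sub] at this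
    linarith
  simp only [smul_eq_mul]
  nlinarith [htr]
end

section
/- Let A₁,…,A_K ∈ ℝ^{d×d} be positive semidefinite, ρ₁,…,ρ_K > 0 with Σ_k ρ_k = 1, A := Σ_k ρ_k A_k, and λ > 0. Then Tr(A(A + λI_d)^{-1}) ≤ Σ_{k=1}^K Tr(A_k(A_k + (λ/ρ_k) I_d)^{-1}). -/
open Matrix
open scoped MatrixOrder

section Aux

set_option linter.unusedSectionVars false

variable {n : Type*} [Fintype n] [DecidableEq n]

lemma aux_trace_nonneg_s16 {M : Matrix n n ℝ} (hM : M.PosSemidef) : 0 ≤ M.trace := by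
  refine Finset.sum_nonneg fun i _ => ?_
  have := hM.dotProduct_mulVec_nonneg (Pi.single i 1)
  simpa [Matrix.mulVec_single, dotProduct, Pi.single_apply, ite_mul] using this

lemma aux_trace_mul_nonneg {P Q : Matrix n n ℝ} (hP : P.PosSemidef) (hQ : Q.PosSemidef) :
    0 ≤ (P * Q).trace := by
  obtain ⟨B, rfl⟩ : ∃ B, Q = Bᴴ * B := CStarAlgebra.nonneg_iff_eq_star_mul_self.mp hQ.nonneg
  have h1 : P * (Bᴴ * B) = (P * Bᴴ) * B := by rw [Matrix.mul_assoc]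
  rw [h1, Matrix.trace_mul_cycle]
  exact aux_trace_nonneg_s16 (hP.mul_mul_conjTranspose_same B)

lemma aux_posSemidef_smul {c : ℝ} {M : Matrix n n ℝ} (hc : 0 ≤ c) (hM : M.PosSemidef) :
    (c • M).PosSemidef := by
  refine Matrix.PosSemidef.of_dotProduct_mulVec_nonneg ?_ (fun x => ?_)
  · unfold Matrix.IsHermitian
    rw [Matrix.conjTranspose_smul, hM.1]
    simp
  · rw [Matrix.smul_mulVec, dotProduct_smul]
    exact mul_nonneg hc (hM.dotProduct_mulVec_nonneg x)

lemma aux_posDef_smul_one {c : ℝ} (hc : 0 < c) : (c • (1 : Matrix n n ℝ)).PosDef := by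
  refine Matrix.PosDef.of_dotProduct_mulVec_pos ?_ (fun x hx => ?_)
  · unfold Matrix.IsHermitian
    rw [Matrix.conjTranspose_smul, Matrix.conjTranspose_one]
    simp
  · rw [Matrix.smul_mulVec, dotProduct_smul, Matrix.one_mulVec]
    exact mul_pos hc (Matrix.dotProduct_star_self_pos_iff.mpr hx)

lemma aux_posDef_conj {B S : Matrix n n ℝ} (hB : B.PosDef) (hS : S.IsHermitian)
    (hSu : IsUnit S) : (S * B * S).PosDef := by
  refine Matrix.PosDef.of_dotProduct_mulVec_pos ?_ (fun x hx => ?_)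
  · unfold Matrix.IsHermitian
    rw [Matrix.conjTranspose_mul, Matrix.conjTranspose_mul, hS.eq, hB.1.eq, Matrix.mul_assoc]
  · have hx' : S *ᵥ x ≠ 0 := by
      have hinj := Matrix.mulVec_injective_iff_isUnit.mpr hSu
      intro h0
      exact hx (hinj (by simpa using h0))
    have key : star x ⬝ᵥ (S * B * S) *ᵥ x = star (S *ᵥ x) ⬝ᵥ B *ᵥ (S *ᵥ x) := by
      rw [Matrix.star_mulVec, hS.eq, ← Matrix.mulVec_mulVec, ← Matrix.mulVec_mulVec,
        Matrix.dotProduct_mulVec]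
    rw [key]
    exact hB.dotProduct_mulVec_pos hx'

/-- If `M` is positive definite and `1 - M` is PSD then `M⁻¹ - 1` is PSD. -/
lemma aux_one_le_inv {M : Matrix n n ℝ} (hM : M.PosDef)
    (h : ((1 : Matrix n n ℝ) - M).PosSemidef) :
    (M⁻¹ - 1).PosSemidef := by
  have hH := hM.isHermitian
  have heig : ∀ i, 0 < hH.eigenvalues i := hM.eigenvalues_pos
  have hle : ∀ i, hH.eigenvalues i ≤ 1 := by
    intro i
    set v : n → ℝ := ⇑(hH.eigenvectorBasis i) with hv
    have hv0 : v ≠ 0 := fun h0 => hH.eigenvectorBasis.orthonormal.ne_zero i (by ext j; simpa using congrFun h0 j)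
    have hMv : M *ᵥ v = hH.eigenvalues i • v := hH.mulVec_eigenvectorBasis i
    have h2 := h.dotProduct_mulVec_nonneg v
    rw [Matrix.sub_mulVec, dotProduct_sub, Matrix.one_mulVec, hMv,
      dotProduct_smul, smul_eq_mul] at h2
    have hvv : 0 < star v ⬝ᵥ v := Matrix.dotProduct_star_self_pos_iff.mpr hv0
    nlinarith
  set U : Matrix n n ℝ := (hH.eigenvectorUnitary : Matrix n n ℝ) with hUdef
  have hUU' : U * star U = 1 := Matrix.mem_unitaryGroup_iff.mp hH.eigenvectorUnitary.2
  have hUU : star U * U = 1 := mul_eq_one_comm.mp hUU'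
  have hspec : M = U * Matrix.diagonal (RCLike.ofReal ∘ hH.eigenvalues) * star U :=
    hH.spectral_theorem
  have hMinv : M⁻¹ = U * Matrix.diagonal (fun i => (hH.eigenvalues i)⁻¹) * star U := by
    apply Matrix.inv_eq_right_inv
    calc M * (U * Matrix.diagonal (fun i => (hH.eigenvalues i)⁻¹) * star U)
        = U * Matrix.diagonal (RCLike.ofReal ∘ hH.eigenvalues) * star U *
          (U * Matrix.diagonal (fun i => (hH.eigenvalues i)⁻¹) * star U) := by
          rw [← hspec]
      _ = U * (Matrix.diagonal (RCLike.ofReal ∘ hH.eigenvalues) * (star U * U) *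
            Matrix.diagonal (fun i => (hH.eigenvalues i)⁻¹)) * star U := by
          simp only [Matrix.mul_assoc]
      _ = U * star U := by
          rw [hUU, mul_one, Matrix.diagonal_mul_diagonal]
          have hd : (fun i => (RCLike.ofReal ∘ hH.eigenvalues) i * (hH.eigenvalues i)⁻¹)
              = fun _ => (1 : ℝ) := by
            funext i
            simp only [Function.comp_apply, RCLike.ofReal_real_eq_id, id_eq]
            exact div_self (heig i).ne'
          rw [hd, Matrix.diagonal_one, mul_one]
      _ = 1 := hUU'
  have hsplit : Matrix.diagonal (fun i => (hH.eigenvalues i)⁻¹ - 1)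
      = Matrix.diagonal (fun i => (hH.eigenvalues i)⁻¹) - 1 := by
    rw [← Matrix.diagonal_one, Matrix.diagonal_sub]
  have hdiff : M⁻¹ - 1 = U * Matrix.diagonal (fun i => (hH.eigenvalues i)⁻¹ - 1) * star U := by
    rw [hMinv, hsplit, Matrix.mul_sub, mul_one, Matrix.sub_mul, hUU']
  rw [hdiff, Matrix.star_eq_conjTranspose]
  refine Matrix.PosSemidef.mul_mul_conjTranspose_same ?_ U
  refine Matrix.posSemidef_diagonal_iff.mpr fun i => ?_
  have h1 := heig i
  have h2 := hle i
  have h3 : (1 : ℝ) ≤ (hH.eigenvalues i)⁻¹ := by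
    rw [le_inv_comm₀ one_pos h1]
    simpa using h2
  linarith

/-- Loewner antitonicity of the inverse for positive definite matrices. -/
lemma aux_inv_antitone_s16 {B C : Matrix n n ℝ} (hB : B.PosDef) (hC : C.PosDef)
    (h : (C - B).PosSemidef) : (B⁻¹ - C⁻¹).PosSemidef := by
  set S : Matrix n n ℝ := CFC.sqrt C with hSdef
  have hSpsd : S.PosSemidef := (CFC.sqrt_nonneg C).posSemidef
  have hS2 : S * S = C := CFC.sqrt_mul_sqrt_self C hC.posSemidef.nonneg
  have hSdet : IsUnit S.det := by
    have hmul : S.det * S.det = C.det := by rw [← Matrix.det_mul, hS2]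
    refine isUnit_iff_ne_zero.mpr fun h0 => ?_
    rw [h0, mul_zero] at hmul
    exact hC.det_pos.ne' hmul.symm
  have hSu : IsUnit S := (Matrix.isUnit_iff_isUnit_det S).mpr hSdet
  have hSH : S.IsHermitian := hSpsd.1
  have hSinvH : (S⁻¹).IsHermitian := hSH.inv
  have hSinvdet : IsUnit (S⁻¹).det := S.isUnit_nonsing_inv_det hSdet
  have hSinvU : IsUnit (S⁻¹) := Matrix.isUnit_nonsing_inv_iff.mpr hSu
  have hBdet : IsUnit B.det := hB.det_pos.ne'.isUnit
  have hSS : S⁻¹ * S = 1 := S.nonsing_inv_mul hSdet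
  have hSS' : S * S⁻¹ = 1 := S.mul_nonsing_inv hSdet
  set M : Matrix n n ℝ := S⁻¹ * B * S⁻¹ with hMdef
  have hMpd : M.PosDef := aux_posDef_conj hB hSinvH hSinvU
  have h1M : ((1 : Matrix n n ℝ) - M).PosSemidef := by
    have hconj : S⁻¹ * (C - B) * S⁻¹ = 1 - M := by
      rw [Matrix.mul_sub, Matrix.sub_mul, hMdef]
      congr 1
      rw [← hS2]
      calc S⁻¹ * (S * S) * S⁻¹ = (S⁻¹ * S) * (S * S⁻¹) := by
            simp only [Matrix.mul_assoc]
        _ = 1 := by rw [hSS, hSS', mul_one]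
    rw [← hconj]
    have := h.mul_mul_conjTranspose_same S⁻¹
    rwa [hSinvH.eq] at this
  have hMinv : M⁻¹ = S * B⁻¹ * S := by
    apply Matrix.inv_eq_right_inv
    calc (S⁻¹ * B * S⁻¹) * (S * B⁻¹ * S)
        = S⁻¹ * (B * ((S⁻¹ * S) * B⁻¹)) * S := by simp only [Matrix.mul_assoc]
      _ = 1 := by rw [hSS, Matrix.one_mul, B.mul_nonsing_inv hBdet, Matrix.mul_one, hSS]
  have hkey : B⁻¹ - C⁻¹ = S⁻¹ * (M⁻¹ - 1) * S⁻¹ := by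
    rw [hMinv, Matrix.mul_sub, mul_one, Matrix.sub_mul]
    congr 1
    · calc B⁻¹ = (S⁻¹ * S) * B⁻¹ * (S * S⁻¹) := by
            rw [hSS, hSS', Matrix.one_mul, Matrix.mul_one]
        _ = S⁻¹ * (S * B⁻¹ * S) * S⁻¹ := by simp only [Matrix.mul_assoc]
    · rw [← hS2, Matrix.mul_inv_rev]
  rw [hkey]
  have := (aux_one_le_inv hMpd h1M).mul_mul_conjTranspose_same S⁻¹
  rwa [hSinvH.eq] at this

lemma aux_posSemidef_sum {ι : Type*} (s : Finset ι) (f : ι → Matrix n n ℝ)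
    (hf : ∀ i ∈ s, (f i).PosSemidef) : (∑ i ∈ s, f i).PosSemidef :=
  Finset.sum_induction f Matrix.PosSemidef (fun _ _ ha hb => ha.add hb)
    Matrix.PosSemidef.zero hf

end Aux

/-- for PSD matrices `A_k`, weights `ρ_k > 0` summing to 1,
`A := Σ_k ρ_k A_k` and `λ > 0`:
`Tr(A(A+λI)⁻¹) ≤ Σ_k Tr(A_k(A_k + (λ/ρ_k)I)⁻¹)`. -/
theorem stmt16
    {d K : ℕ} (A : Fin K → Matrix (Fin d) (Fin d) ℝ)
    (hA : ∀ k, (A k).PosSemidef)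
    (ρ : Fin K → ℝ) (hρpos : ∀ k, 0 < ρ k) (hρsum : ∑ k, ρ k = 1)
    (lam : ℝ) (hlam : 0 < lam) :
    Matrix.trace ((∑ k, ρ k • A k) * ((∑ k, ρ k • A k) + lam • 1)⁻¹)
      ≤ ∑ k, Matrix.trace (A k * (A k + (lam / ρ k) • 1)⁻¹) := by
  classical
  set As : Matrix (Fin d) (Fin d) ℝ := ∑ k, ρ k • A k with hAsdef
  have hAsPSD : As.PosSemidef :=
    aux_posSemidef_sum _ _ (fun j _ => aux_posSemidef_smul (hρpos j).le (hA j))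
  set Cm : Matrix (Fin d) (Fin d) ℝ := As + lam • 1 with hCmdef
  have hCpd : Cm.PosDef := Matrix.PosDef.posSemidef_add hAsPSD (aux_posDef_smul_one hlam)
  have step1 : (As * Cm⁻¹).trace = ∑ k, ρ k * ((A k) * Cm⁻¹).trace := by
    rw [hAsdef, Finset.sum_mul]
    simp only [Matrix.smul_mul]
    rw [Matrix.trace_sum]
    simp only [Matrix.trace_smul, smul_eq_mul]
  have key : ∀ k, ρ k * ((A k) * Cm⁻¹).trace ≤ (A k * (A k + (lam / ρ k) • 1)⁻¹).trace := by
    intro k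
    set Dk : Matrix (Fin d) (Fin d) ℝ := A k + (lam / ρ k) • 1 with hDkdef
    have hDkpd : Dk.PosDef :=
      Matrix.PosDef.posSemidef_add (hA k) (aux_posDef_smul_one (div_pos hlam (hρpos k)))
    set Bk : Matrix (Fin d) (Fin d) ℝ := ρ k • A k + lam • 1 with hBkdef
    have hBkeq : ρ k • Dk = Bk := by
      rw [hDkdef, hBkdef, smul_add, smul_smul, mul_div_cancel₀ _ (hρpos k).ne']
    have hBkpd : Bk.PosDef :=
      Matrix.PosDef.posSemidef_add (aux_posSemidef_smul (hρpos k).le (hA k)) (aux_posDef_smul_one hlam)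
    have hdiffPSD : (Cm - Bk).PosSemidef := by
      have hsum := Finset.sum_erase_add Finset.univ (fun j => ρ j • A j) (Finset.mem_univ k)
      have heq : Cm - Bk = ∑ j ∈ Finset.univ.erase k, ρ j • A j := by
        rw [hCmdef, hBkdef, hAsdef, ← hsum]
        abel
      rw [heq]
      exact aux_posSemidef_sum _ _ (fun j _ => aux_posSemidef_smul (hρpos j).le (hA j))
    have hanti := aux_inv_antitone_s16 hBkpd hCpd hdiffPSD
    have htr := aux_trace_mul_nonneg (hA k) hanti
    rw [Matrix.mul_sub, Matrix.trace_sub] at htr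
    have hBkinv : Bk⁻¹ = (ρ k)⁻¹ • Dk⁻¹ := by
      have hinst : Invertible (ρ k) := invertibleOfNonzero (hρpos k).ne'
      rw [← hBkeq, Matrix.inv_smul (A := Dk) (ρ k) hDkpd.det_pos.ne'.isUnit, invOf_eq_inv (ρ k)]
    have hfin : ρ k * (A k * Bk⁻¹).trace = (A k * Dk⁻¹).trace := by
      rw [hBkinv, Matrix.mul_smul, Matrix.trace_smul, smul_eq_mul, ← mul_assoc,
        mul_inv_cancel₀ (hρpos k).ne', one_mul]
    calc ρ k * (A k * Cm⁻¹).trace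
        ≤ ρ k * (A k * Bk⁻¹).trace :=
          mul_le_mul_of_nonneg_left (by linarith) (hρpos k).le
      _ = (A k * Dk⁻¹).trace := hfin
  calc (As * Cm⁻¹).trace = ∑ k, ρ k * (A k * Cm⁻¹).trace := step1
    _ ≤ ∑ k, (A k * (A k + (lam / ρ k) • 1)⁻¹).trace := Finset.sum_le_sum fun k _ => key k
end

section
/- Under MCAR (H ⟂ (X,Y)), the effective dimension of zero-imputation is at most the sum of local effective dimensions: for every λ > 0, d_λ^{I⁰} := Tr(Σ^{I⁰}(Σ^{I⁰} + λI_d)^{-1}) ≤ Σ_{k=1}^K Tr(Σ_{obs(k)}(Σ_{obs(k)} + (λ/ρ_k) I)^{-1}), where Σ^{I⁰} := E[(M ⊙ X)(M ⊙ X)^⊤] = Σ_k ρ_k Σ^{(k)} and Σ^{(k)} is the covariance of X with all coordinates outside obs(k) set to zero. -/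
namespace MatrixHelpers

open Matrix

variable {n : Type*} [Fintype n] [DecidableEq n]

section SqrtHelper

open scoped MatrixOrder

lemma exists_sqrt' {A : Matrix n n ℝ} (hA : A.PosSemidef) :
    ∃ S : Matrix n n ℝ, S * S = A ∧ Sᴴ = S :=
  ⟨CFC.sqrt A, CFC.sqrt_mul_sqrt_self A hA.nonneg, (CFC.sqrt_nonneg A).posSemidef.isHermitian⟩

end SqrtHelper

lemma trace_nonneg_of_posSemidef {M : Matrix n n ℝ} (hM : M.PosSemidef) :
    0 ≤ M.trace := by
  rw [Matrix.trace]
  refine Finset.sum_nonneg fun i _ => ?_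
  have := hM.dotProduct_mulVec_nonneg (Pi.single i 1)
  simpa [dotProduct, Pi.single_apply, ite_mul] using this

lemma trace_mul_nonneg_of_posSemidef {A B : Matrix n n ℝ}
    (hA : A.PosSemidef) (hB : B.PosSemidef) : 0 ≤ (A * B).trace := by
  obtain ⟨S, hSS, hSH⟩ := exists_sqrt' hA
  have h1 : (S * B * S).trace = (A * B).trace := by
    rw [Matrix.trace_mul_cycle, hSS]
  rw [← h1]
  have := hB.mul_mul_conjTranspose_same S
  rw [hSH] at this
  exact trace_nonneg_of_posSemidef this

lemma isHermitian_smul_one (c : ℝ) : (c • (1 : Matrix n n ℝ)).IsHermitian := by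
  unfold Matrix.IsHermitian
  rw [Matrix.conjTranspose_smul, Matrix.isHermitian_one.eq]
  simp

lemma posDef_add_smul_one {A : Matrix n n ℝ} (hA : A.PosSemidef) {c : ℝ} (hc : 0 < c) :
    (A + c • 1).PosDef := by
  refine Matrix.PosDef.of_dotProduct_mulVec_pos (hA.isHermitian.add (isHermitian_smul_one c)) fun x hx => ?_
  have h1 : (A + c • 1) *ᵥ x = A *ᵥ x + c • x := by
    rw [Matrix.add_mulVec, Matrix.smul_mulVec, Matrix.one_mulVec]
  rw [h1, dotProduct_add]
  have h2 : 0 < dotProduct (star x) (c • x) := by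
    rw [dotProduct_smul]
    have : (0:ℝ) < dotProduct (star x) x := by
      simpa using Matrix.dotProduct_star_self_pos_iff.2 hx
    positivity
  have h3 : 0 ≤ dotProduct (star x) (A *ᵥ x) := hA.dotProduct_mulVec_nonneg x
  linarith

lemma psd_congr {A B : Matrix n n ℝ} (hA : A.PosSemidef) (hBH : Bᴴ = B) :
    (B * A * B).PosSemidef := by
  have := hA.mul_mul_conjTranspose_same B
  rwa [hBH] at this


/-- inverse is antitone on positive definite matrices -/
lemma posSemidef_inv_sub_inv {A B : Matrix n n ℝ} (hA : A.PosDef) (hB : B.PosDef)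
    (hAB : (A - B).PosSemidef) : (B⁻¹ - A⁻¹).PosSemidef := by
  classical
  obtain ⟨S, hSS, hSH⟩ : ∃ S : Matrix n n ℝ, S * S = A ∧ Sᴴ = S :=
    exists_sqrt' hA.posSemidef
  have hdetA : IsUnit A.det := isUnit_iff_ne_zero.2 hA.det_pos.ne'
  have hdetS : IsUnit S.det := by
    rw [← hSS, Matrix.det_mul] at hdetA
    exact isUnit_of_mul_isUnit_left hdetA
  have hdetB : IsUnit B.det := isUnit_iff_ne_zero.2 hB.det_pos.ne'
  have hSi : S * S⁻¹ = 1 := Matrix.mul_nonsing_inv S hdetS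
  have hiS : S⁻¹ * S = 1 := Matrix.nonsing_inv_mul S hdetS
  have hBi : B * B⁻¹ = 1 := Matrix.mul_nonsing_inv B hdetB
  have hiB : B⁻¹ * B = 1 := Matrix.nonsing_inv_mul B hdetB
  have hSiH : (S⁻¹)ᴴ = S⁻¹ := by
    rw [Matrix.conjTranspose_nonsing_inv, hSH]
  set Z := S⁻¹ * B * S⁻¹ with hZdef
  have hZpsd : Z.PosSemidef := psd_congr hB.posSemidef hSiH
  have honeZ : (1 - Z).PosSemidef := by
    have h1 : S⁻¹ * (A - B) * S⁻¹ = 1 - Z := by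
      rw [Matrix.mul_sub, Matrix.sub_mul, hZdef, ← hSS]
      congr 1
      calc S⁻¹ * (S * S) * S⁻¹ = (S⁻¹ * S) * (S * S⁻¹) := by
            simp only [Matrix.mul_assoc]
        _ = 1 := by rw [hiS, hSi, Matrix.one_mul]
    rw [← h1]
    exact psd_congr hAB hSiH
  obtain ⟨T, hTT, hTH⟩ : ∃ T : Matrix n n ℝ, T * T = Z ∧ Tᴴ = T :=
    exists_sqrt' hZpsd
  have hZZ : (Z - Z * Z).PosSemidef := by
    have h2 : T * (1 - Z) * T = Z - Z * Z := by
      rw [Matrix.mul_sub, Matrix.sub_mul, Matrix.mul_one]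
      congr 1
      · calc T * Z * T = T * (T * T) * T := by rw [hTT]
          _ = (T * T) * (T * T) := by simp only [Matrix.mul_assoc]
          _ = Z * Z := by rw [hTT]
    rw [← h2]
    exact psd_congr honeZ hTH
  set Zi := S * B⁻¹ * S with hZidef
  have hZiH : Ziᴴ = Zi := by
    rw [hZidef, Matrix.conjTranspose_mul, Matrix.conjTranspose_mul, hSH,
      Matrix.conjTranspose_nonsing_inv, hB.isHermitian.eq, Matrix.mul_assoc]
  have hZiZ : Zi * Z = 1 := by
    rw [hZidef, hZdef]
    calc S * B⁻¹ * S * (S⁻¹ * B * S⁻¹)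
        = S * B⁻¹ * ((S * S⁻¹) * B) * S⁻¹ := by simp only [Matrix.mul_assoc]
      _ = S * (B⁻¹ * B) * S⁻¹ := by rw [hSi, Matrix.one_mul]; simp only [Matrix.mul_assoc]
      _ = 1 := by rw [hiB, Matrix.mul_one, hSi]
  have hZZi : Z * Zi = 1 := by
    rw [hZidef, hZdef]
    calc S⁻¹ * B * S⁻¹ * (S * B⁻¹ * S)
        = S⁻¹ * B * ((S⁻¹ * S) * B⁻¹) * S := by simp only [Matrix.mul_assoc]
      _ = S⁻¹ * (B * B⁻¹) * S := by rw [hiS, Matrix.one_mul]; simp only [Matrix.mul_assoc]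
      _ = 1 := by rw [hBi, Matrix.mul_one, hiS]
  have hZi1 : (Zi - 1).PosSemidef := by
    have h3 : Zi * (Z - Z * Z) * Zi = Zi - 1 := by
      rw [Matrix.mul_sub, Matrix.sub_mul]
      congr 1
      · rw [hZiZ, Matrix.one_mul]
      · calc Zi * (Z * Z) * Zi = Zi * Z * (Z * Zi) := by simp only [Matrix.mul_assoc]
          _ = 1 := by rw [hZiZ, hZZi, Matrix.one_mul]
    rw [← h3]
    exact psd_congr hZZ hZiH
  have hfin : S⁻¹ * (Zi - 1) * S⁻¹ = B⁻¹ - A⁻¹ := by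
    rw [Matrix.mul_sub, Matrix.sub_mul]
    congr 1
    · calc S⁻¹ * Zi * S⁻¹ = (S⁻¹ * S) * (B⁻¹ * (S * S⁻¹)) := by
            rw [hZidef]; simp only [Matrix.mul_assoc]
        _ = B⁻¹ := by rw [hiS, hSi, Matrix.one_mul, Matrix.mul_one]
    · rw [Matrix.mul_one, ← Matrix.mul_inv_rev, hSS]
  rw [← hfin]
  exact psd_congr hZi1 hSiH

lemma trace_masked_eq {Sig : Matrix n n ℝ} (hSig : Sig.PosSemidef)
    (s : Finset n) {c : ℝ} (hc : 0 < c)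
    (Sk : Matrix n n ℝ)
    (hSk : ∀ l j, Sk l j = if l ∈ s ∧ j ∈ s then Sig l j else 0) :
    (Sk * (Sk + c • 1)⁻¹).trace
      = ((Sig.submatrix (Subtype.val : ↥s → n) Subtype.val)
          * ((Sig.submatrix (Subtype.val : ↥s → n) Subtype.val) + c • 1)⁻¹).trace := by
  classical
  set Sub := Sig.submatrix (Subtype.val : ↥s → n) Subtype.val with hSubdef
  have hSub : Sub.PosSemidef := hSig.submatrix _
  have hSubc : (Sub + c • 1).PosDef := posDef_add_smul_one hSub hc
  have hdet : IsUnit (Sub + c • 1).det := isUnit_iff_ne_zero.2 hSubc.det_pos.ne'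
  have hinv : (Sub + c • 1) * (Sub + c • 1)⁻¹ = 1 := Matrix.mul_nonsing_inv _ hdet
  set V := (Sub + c • 1)⁻¹ with hVdef
  set P : Matrix n n ℝ := fun l j =>
    if hl : l ∈ s then (if hj : j ∈ s then V ⟨l, hl⟩ ⟨j, hj⟩ else 0)
    else (if l = j then c⁻¹ else 0) with hPdef
  have hP : (Sk + c • 1) * P = 1 := by
    ext l j
    rw [Matrix.mul_apply]
    by_cases hl : l ∈ s
    · by_cases hj : j ∈ s
      · have hzero : ∀ m ∈ Finset.univ, m ∉ s →
            (Sk + c • 1) l m * P m j = 0 := by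
          intro m _ hm
          have h1 : (Sk + c • 1) l m = 0 := by
            simp only [Matrix.add_apply, Matrix.smul_apply, Matrix.one_apply, hSk]
            have : ¬ (l ∈ s ∧ m ∈ s) := fun h => hm h.2
            have hlm : l ≠ m := fun h => hm (h ▸ hl)
            simp [this, hlm]
          rw [h1, zero_mul]
        rw [← Finset.sum_subset (Finset.subset_univ s) hzero]
        rw [← Finset.sum_coe_sort s (fun m => (Sk + c • 1) l m * P m j)]
        have hterm : ∀ m : ↥s, (Sk + c • 1) l (↑m) * P (↑m) j
            = (Sub + c • 1) ⟨l, hl⟩ m * V m ⟨j, hj⟩ := by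
          intro m
          have h2 : P (↑m) j = V m ⟨j, hj⟩ := by
            simp only [hPdef, m.2, hj, dif_pos]
          have h3 : (Sk + c • 1) l (↑m) = (Sub + c • 1) ⟨l, hl⟩ m := by
            simp only [Matrix.add_apply, Matrix.smul_apply, Matrix.one_apply, hSk,
              hSubdef, Matrix.submatrix_apply, hl, m.2, and_self, if_true]
            simp [Subtype.ext_iff]
          rw [h2, h3]
        rw [Finset.sum_congr rfl (fun m _ => hterm m), ← Matrix.mul_apply, hinv]
        simp [Matrix.one_apply, Subtype.ext_iff]
      · have hzero : ∀ m ∈ Finset.univ, (Sk + c • 1) l m * P m j = 0 := by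
          intro m _
          by_cases hm : m ∈ s
          · have : P m j = 0 := by simp only [hPdef, hm, hj, dif_pos, dif_neg, not_false_iff]
            rw [this, mul_zero]
          · have h1 : (Sk + c • 1) l m = 0 := by
              simp only [Matrix.add_apply, Matrix.smul_apply, Matrix.one_apply, hSk]
              have : ¬ (l ∈ s ∧ m ∈ s) := fun h => hm h.2
              have hlm : l ≠ m := fun h => hm (h ▸ hl)
              simp [this, hlm]
            rw [h1, zero_mul]
        rw [Finset.sum_eq_zero (fun m hm => hzero m hm)]
        have : l ≠ j := fun h => hj (h ▸ hl)
        simp [Matrix.one_apply, this]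
    · have hterm : ∀ m : n, (Sk + c • 1) l m * P m j
          = (if l = m then c else 0) * P m j := by
        intro m
        congr 1
        simp only [Matrix.add_apply, Matrix.smul_apply, Matrix.one_apply, hSk]
        have : ¬ (l ∈ s ∧ m ∈ s) := fun h => hl h.1
        simp [this]
      rw [Finset.sum_congr rfl (fun m _ => hterm m)]
      simp only [ite_mul, zero_mul]
      rw [Finset.sum_ite_eq]
      simp only [Finset.mem_univ, if_true, hPdef, hl, dif_neg, not_false_iff,
        Matrix.one_apply]
      by_cases hlj : l = j
      · simp [hlj, mul_inv_cancel₀ hc.ne']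
      · simp [hlj]
  have hPinv : (Sk + c • 1)⁻¹ = P := Matrix.inv_eq_right_inv hP
  rw [hPinv]
  unfold Matrix.trace
  have hdiag : ∀ l : n, (Sk * P).diag l
      = if hl : l ∈ s then (Sub * V) ⟨l, hl⟩ ⟨l, hl⟩ else 0 := by
    intro l
    rw [Matrix.diag_apply, Matrix.mul_apply]
    by_cases hl : l ∈ s
    · rw [dif_pos hl, Matrix.mul_apply]
      have hzero : ∀ m ∈ Finset.univ, m ∉ s → Sk l m * P m l = 0 := by
        intro m _ hm
        have : Sk l m = 0 := by
          rw [hSk]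
          have : ¬ (l ∈ s ∧ m ∈ s) := fun h => hm h.2
          simp [this]
        rw [this, zero_mul]
      rw [← Finset.sum_subset (Finset.subset_univ s) hzero,
        ← Finset.sum_coe_sort s (fun m => Sk l m * P m l)]
      refine Finset.sum_congr rfl fun m _ => ?_
      have h2 : P (↑m) l = V m ⟨l, hl⟩ := by
        simp only [hPdef, m.2, hl, dif_pos]
      have h3 : Sk l (↑m) = Sub ⟨l, hl⟩ m := by
        rw [hSk]
        simp [hl, m.2, hSubdef]
      rw [h2, h3]
    · rw [dif_neg hl]
      refine Finset.sum_eq_zero fun m _ => ?_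
      have : Sk l m = 0 := by
        rw [hSk]
        have : ¬ (l ∈ s ∧ m ∈ s) := fun h => hl h.1
        simp [this]
      rw [this, zero_mul]
  calc ∑ l, (Sk * P).diag l
      = ∑ l : n, if hl : l ∈ s then (Sub * V) ⟨l, hl⟩ ⟨l, hl⟩ else 0 :=
        Finset.sum_congr rfl fun l _ => hdiag l
    _ = ∑ l ∈ s, if hl : l ∈ s then (Sub * V) ⟨l, hl⟩ ⟨l, hl⟩ else 0 := by
        refine (Finset.sum_subset (Finset.subset_univ s) fun l _ hl => ?_).symm
        rw [dif_neg hl]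
    _ = ∑ l : ↥s, if hl : (↑l : n) ∈ s then (Sub * V) ⟨↑l, hl⟩ ⟨↑l, hl⟩ else 0 :=
        (Finset.sum_coe_sort s _).symm
    _ = ∑ l : ↥s, (Sub * V).diag l := by
        refine Finset.sum_congr rfl fun l _ => ?_
        rw [dif_pos l.2, Matrix.diag_apply]

lemma posSemidef_mask {Sig : Matrix n n ℝ} (hSig : Sig.PosSemidef) (s : Finset n)
    (Sk : Matrix n n ℝ)
    (hSk : ∀ l j, Sk l j = if l ∈ s ∧ j ∈ s then Sig l j else 0) :
    Sk.PosSemidef := by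
  refine Matrix.PosSemidef.of_dotProduct_mulVec_nonneg ?_ ?_
  · ext l j
    rw [Matrix.conjTranspose_apply, hSk, hSk, star_trivial]
    by_cases h : l ∈ s ∧ j ∈ s
    · rw [if_pos ⟨h.2, h.1⟩, if_pos h]
      have := congrFun (congrFun hSig.isHermitian.eq j) l
      rw [Matrix.conjTranspose_apply, star_trivial] at this
      exact this.symm
    · rw [if_neg (fun hh => h ⟨hh.2, hh.1⟩), if_neg h]
  · intro x
    set z : n → ℝ := fun i => if i ∈ s then x i else 0 with hzdef
    have key : dotProduct (star x) (Sk *ᵥ x) = dotProduct (star z) (Sig *ᵥ z) := by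
      simp only [dotProduct, Matrix.mulVec, star_trivial, Pi.star_apply]
      refine Finset.sum_congr rfl fun l _ => ?_
      by_cases hl : l ∈ s
      · have hz : z l = x l := by rw [hzdef]; simp [hl]
        rw [hz]
        congr 1
        refine Finset.sum_congr rfl fun j _ => ?_
        by_cases hj : j ∈ s
        · have : z j = x j := by rw [hzdef]; simp [hj]
          rw [this, hSk, if_pos ⟨hl, hj⟩]
        · have : z j = 0 := by rw [hzdef]; simp [hj]
          rw [this, hSk, if_neg (fun hh => hj hh.2), zero_mul, mul_zero]
      · have hz : z l = 0 := by rw [hzdef]; simp [hl]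
        rw [hz, zero_mul]
        have : ∀ j, Sk l j * x j = 0 := by
          intro j
          rw [hSk, if_neg (fun hh => hl hh.1), zero_mul]
        simp only [this, Finset.sum_const_zero, mul_zero]
    rw [key]
    exact hSig.dotProduct_mulVec_nonneg z

lemma posSemidef_smul_nonneg {M : Matrix n n ℝ} (hM : M.PosSemidef) {c : ℝ} (hc : 0 ≤ c) :
    (c • M).PosSemidef := by
  refine Matrix.PosSemidef.of_dotProduct_mulVec_nonneg ?_ ?_
  · ext l j
    rw [Matrix.conjTranspose_apply, Matrix.smul_apply, Matrix.smul_apply, star_trivial]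
    have := congrFun (congrFun hM.isHermitian.eq l) j
    rw [Matrix.conjTranspose_apply, star_trivial] at this
    rw [this]
  · intro x
    rw [Matrix.smul_mulVec, dotProduct_smul, smul_eq_mul]
    exact mul_nonneg hc (hM.dotProduct_mulVec_nonneg x)

lemma posSemidef_sum {ι : Type*} (t : Finset ι) (f : ι → Matrix n n ℝ)
    (h : ∀ i ∈ t, (f i).PosSemidef) : (∑ i ∈ t, f i).PosSemidef := by
  classical
  induction t using Finset.induction with
  | empty => simpa using (Matrix.PosSemidef.zero (n := n) (R := ℝ))
  | @insert a s ha ih =>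
    rw [Finset.sum_insert ha]
    exact (h a (Finset.mem_insert_self a s)).add
      (ih fun i hi => h i (Finset.mem_insert_of_mem hi))

end MatrixHelpers

open MeasureTheory ProbabilityTheory Matrix

/-- under MCAR, the effective dimension of zero-imputation is at
most the sum of the local effective dimensions:
`Tr(Σ^{I⁰}(Σ^{I⁰}+λI)⁻¹) ≤ Σ_k Tr(Σ_{obs(k)}(Σ_{obs(k)} + (λ/ρ_k)I)⁻¹)`,
where `Σ^{I⁰} = E[(M⊙X)(M⊙X)⊤] = Σ_k ρ_k Σ⁽ᵏ⁾`. -/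
theorem stmt17
    {Ω : Type*} [MeasurableSpace Ω] (μ : Measure Ω) [IsProbabilityMeasure μ]
    {d K : ℕ}
    (obs : Fin K → Finset (Fin d))
    (H : Ω → Fin K) (X : Ω → Fin d → ℝ) (Y : Ω → ℝ)
    (hHmeas : Measurable H)
    (hXmeas : ∀ j, Measurable fun ω => X ω j)
    (hX2 : ∀ j, MemLp (fun ω => X ω j) 2 μ)
    -- MCAR : client index independent of the data
    (hMCAR : IndepFun H (fun ω => (X ω, Y ω)) μ)
    -- client proportions
    (ρ : Fin K → ℝ) (hρ : ∀ k, ρ k = (μ (H ⁻¹' {k})).toReal)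
    (hρpos : ∀ k, 0 < ρ k)
    -- the observation mask
    (Mf : Ω → Fin d → ℝ)
    (hMf : ∀ ω j, Mf ω j = if j ∈ obs (H ω) then (1 : ℝ) else 0)
    -- population second moments
    (Sig : Matrix (Fin d) (Fin d) ℝ)
    (hSig : ∀ l j, Sig l j = ∫ ω, X ω l * X ω j ∂μ)
    -- covariance of the zero-imputed covariates
    (SigI0 : Matrix (Fin d) (Fin d) ℝ)
    (hSigI0 : ∀ l j, SigI0 l j = ∫ ω, (Mf ω l * X ω l) * (Mf ω j * X ω j) ∂μ)
    -- the masked covariances Σ⁽ᵏ⁾ (agreeing with Σ on obs(k)×obs(k), zero elsewhere)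
    (Sigk : Fin K → Matrix (Fin d) (Fin d) ℝ)
    (hSigk : ∀ k l j, Sigk k l j
      = if l ∈ obs k ∧ j ∈ obs k then Sig l j else 0)
    -- regularization
    (lam : ℝ) (hlam : 0 < lam) :
    (∀ l j, SigI0 l j = ∑ k, ρ k * Sigk k l j) ∧
    Matrix.trace (SigI0 * (SigI0 + lam • 1)⁻¹)
      ≤ ∑ k, Matrix.trace
          ((Sig.submatrix (Subtype.val : ↥(obs k) → Fin d)
              (Subtype.val : ↥(obs k) → Fin d))
            * ((Sig.submatrix (Subtype.val : ↥(obs k) → Fin d)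
                (Subtype.val : ↥(obs k) → Fin d)) + (lam / ρ k) • 1)⁻¹) := by
  classical
  -- integrability of products
  have hXX : ∀ l j : Fin d, Integrable (fun ω => X ω l * X ω j) μ := by
    intro l j
    have h := (hX2 j).smul (hX2 l) (p := 2) (q := 2) (r := 1)
    exact memLp_one_iff_integrable.mp h
  -- independence computation
  have hindk : ∀ (k : Fin K) (l j : Fin d),
      ∫ ω, (if H ω = k then (1:ℝ) else 0) * (X ω l * X ω j) ∂μ
        = ρ k * Sig l j := by
    intro k l j
    have hφ : Measurable (fun h : Fin K => if h = k then (1:ℝ) else 0) :=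
      measurable_of_countable _
    have hψ : Measurable (fun p : (Fin d → ℝ) × ℝ => p.1 l * p.1 j) :=
      ((measurable_pi_apply l).comp measurable_fst).mul
        ((measurable_pi_apply j).comp measurable_fst)
    have hind : IndepFun (fun ω => if H ω = k then (1:ℝ) else 0)
        (fun ω => X ω l * X ω j) μ := hMCAR.comp hφ hψ
    have h2 := hind.integral_fun_mul_eq_mul_integral
      ((hφ.comp hHmeas).aestronglyMeasurable) (hXX l j).aestronglyMeasurable
    have h3 : ∫ ω, (if H ω = k then (1:ℝ) else 0) ∂μ = (μ (H ⁻¹' {k})).toReal := by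
      have he : (fun ω => if H ω = k then (1:ℝ) else 0)
          = Set.indicator (H ⁻¹' {k}) (fun _ => (1:ℝ)) := by
        funext ω
        by_cases h : H ω = k <;> simp [Set.indicator_apply, h]
      rw [he, integral_indicator_const (1:ℝ) (hHmeas (measurableSet_singleton k))]
      simp [measureReal_def]
    calc ∫ ω, (if H ω = k then (1:ℝ) else 0) * (X ω l * X ω j) ∂μ
        = (∫ ω, (if H ω = k then (1:ℝ) else 0) ∂μ) * ∫ ω, X ω l * X ω j ∂μ := h2
      _ = ρ k * Sig l j := by rw [h3, hρ k, hSig l j]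
  -- part 1 : the decomposition
  have hdecomp : ∀ l j, SigI0 l j = ∑ k, ρ k * Sigk k l j := by
    intro l j
    rw [hSigI0]
    have hpt : (fun ω => (Mf ω l * X ω l) * (Mf ω j * X ω j))
        = fun ω => ∑ k, (if l ∈ obs k ∧ j ∈ obs k then (1:ℝ) else 0)
            * ((if H ω = k then (1:ℝ) else 0) * (X ω l * X ω j)) := by
      funext ω
      rw [Finset.sum_eq_single (H ω)]
      · by_cases h1 : l ∈ obs (H ω) <;> by_cases h2 : j ∈ obs (H ω) <;>
          simp [hMf, h1, h2] <;> ring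
      · intro b _ hb
        have : H ω ≠ b := fun h => hb h.symm
        simp [this]
      · intro h; exact absurd (Finset.mem_univ _) h
    have hintk : ∀ k : Fin K, Integrable (fun ω =>
        (if l ∈ obs k ∧ j ∈ obs k then (1:ℝ) else 0)
          * ((if H ω = k then (1:ℝ) else 0) * (X ω l * X ω j))) μ := by
      intro k
      refine Integrable.const_mul ?_ _
      refine Integrable.bdd_mul (c := 1) (hXX l j)
        ((Measurable.comp (measurable_of_countable
          (fun h : Fin K => if h = k then (1:ℝ) else 0)) hHmeas).aestronglyMeasurable)
        (ae_of_all _ fun ω => ?_)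
      by_cases h : H ω = k <;> simp [h]
    rw [hpt, integral_finset_sum _ (fun k _ => hintk k)]
    refine Finset.sum_congr rfl fun k _ => ?_
    rw [integral_const_mul, hindk k l j, hSigk]
    by_cases h : l ∈ obs k ∧ j ∈ obs k <;> simp [h] <;> ring
  refine ⟨hdecomp, ?_⟩
  -- Σ is PSD
  have hSigPSD : Sig.PosSemidef := by
    refine Matrix.PosSemidef.of_dotProduct_mulVec_nonneg ?_ ?_
    · ext l j
      rw [Matrix.conjTranspose_apply, star_trivial, hSig, hSig]
      have : (fun ω => X ω j * X ω l) = fun ω => X ω l * X ω j :=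
        funext fun ω => mul_comm _ _
      rw [this]
    · intro x
      have key : dotProduct (star x) (Sig *ᵥ x)
          = ∫ ω, (∑ l, x l * X ω l) * (∑ j, x j * X ω j) ∂μ := by
        simp only [dotProduct, Matrix.mulVec, Pi.star_apply, star_trivial]
        have hterm : ∀ l j : Fin d, x l * (Sig l j * x j)
            = ∫ ω, (x l * x j) * (X ω l * X ω j) ∂μ := by
          intro l j
          rw [integral_const_mul, ← hSig l j]
          ring
        calc ∑ l, x l * ∑ j, Sig l j * x j
            = ∑ l, ∑ j, x l * (Sig l j * x j) := by
              refine Finset.sum_congr rfl fun l _ => ?_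
              rw [Finset.mul_sum]
          _ = ∑ l, ∑ j, ∫ ω, (x l * x j) * (X ω l * X ω j) ∂μ := by
              exact Finset.sum_congr rfl fun l _ =>
                Finset.sum_congr rfl fun j _ => hterm l j
          _ = ∑ l, ∫ ω, ∑ j, (x l * x j) * (X ω l * X ω j) ∂μ := by
              refine Finset.sum_congr rfl fun l _ => ?_
              exact (integral_finset_sum _ fun j _ => (hXX l j).const_mul _).symm
          _ = ∫ ω, ∑ l, ∑ j, (x l * x j) * (X ω l * X ω j) ∂μ := by
              refine (integral_finset_sum _ fun l _ => ?_).symm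
              exact integrable_finset_sum _ fun j _ => (hXX l j).const_mul _
          _ = ∫ ω, (∑ l, x l * X ω l) * (∑ j, x j * X ω j) ∂μ := by
              have hfun : (fun ω => ∑ l, ∑ j, (x l * x j) * (X ω l * X ω j))
                  = fun ω => (∑ l, x l * X ω l) * (∑ j, x j * X ω j) := by
                funext ω
                rw [Finset.sum_mul_sum]
                exact Finset.sum_congr rfl fun l _ =>
                  Finset.sum_congr rfl fun j _ => by ring
              rw [hfun]
      rw [key]
      exact integral_nonneg fun ω => mul_self_nonneg _
  have hSigkPSD : ∀ k, (Sigk k).PosSemidef :=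
    fun k => MatrixHelpers.posSemidef_mask hSigPSD (obs k) _ (hSigk k)
  have hBk : ∀ k, (ρ k • Sigk k).PosSemidef :=
    fun k => MatrixHelpers.posSemidef_smul_nonneg (hSigkPSD k) (hρpos k).le
  have hAeq : SigI0 = ∑ k, ρ k • Sigk k := by
    ext l j
    rw [hdecomp, Matrix.sum_apply]
    exact Finset.sum_congr rfl fun k _ => by rw [Matrix.smul_apply, smul_eq_mul]
  have hAPSD : SigI0.PosSemidef := by
    rw [hAeq]
    exact MatrixHelpers.posSemidef_sum _ _ fun k _ => hBk k
  have hApos : (SigI0 + lam • 1).PosDef := MatrixHelpers.posDef_add_smul_one hAPSD hlam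
  have hInvPSD : (SigI0 + lam • 1)⁻¹.PosSemidef := hApos.inv.posSemidef
  have hsplit : ∀ C : Matrix (Fin d) (Fin d) ℝ,
      (SigI0 * C).trace = ∑ k, ((ρ k • Sigk k) * C).trace := by
    intro C
    rw [hAeq, Finset.sum_mul, Matrix.trace_sum]
  rw [hsplit]
  refine Finset.sum_le_sum fun k _ => ?_
  have hc : 0 < lam / ρ k := div_pos hlam (hρpos k)
  have hCk : (Sigk k + (lam / ρ k) • 1).PosDef :=
    MatrixHelpers.posDef_add_smul_one (hSigkPSD k) hc
  have hdetCk : IsUnit (Sigk k + (lam / ρ k) • 1).det :=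
    isUnit_iff_ne_zero.2 hCk.det_pos.ne'
  have hBkeq : (ρ k • Sigk k) + lam • 1 = ρ k • (Sigk k + (lam / ρ k) • 1) := by
    have hb : ρ k * (lam / ρ k) = lam := by
      rw [mul_comm, div_mul_cancel₀ _ (hρpos k).ne']
    rw [smul_add, smul_smul, hb]
  have hBkpos : ((ρ k • Sigk k) + lam • 1).PosDef :=
    MatrixHelpers.posDef_add_smul_one (hBk k) hlam
  have hdiff : ((SigI0 + lam • 1) - ((ρ k • Sigk k) + lam • 1)).PosSemidef := by
    have h2 := Finset.sum_erase_add Finset.univ (fun k' => ρ k' • Sigk k')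
      (Finset.mem_univ k)
    have h1 : (SigI0 + lam • 1) - ((ρ k • Sigk k) + lam • 1)
        = ∑ k' ∈ Finset.univ.erase k, ρ k' • Sigk k' := by
      rw [hAeq, ← h2]
      abel
    rw [h1]
    exact MatrixHelpers.posSemidef_sum _ _ fun k' _ => hBk k'
  have hmono : (((ρ k • Sigk k) + lam • 1)⁻¹ - (SigI0 + lam • 1)⁻¹).PosSemidef :=
    MatrixHelpers.posSemidef_inv_sub_inv hApos hBkpos hdiff
  have hstep1 : ((ρ k • Sigk k) * (SigI0 + lam • 1)⁻¹).trace
      ≤ ((ρ k • Sigk k) * ((ρ k • Sigk k) + lam • 1)⁻¹).trace := by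
    have h0 := MatrixHelpers.trace_mul_nonneg_of_posSemidef (hBk k) hmono
    rw [Matrix.mul_sub, Matrix.trace_sub] at h0
    linarith
  have hstep2 : ((ρ k • Sigk k) * ((ρ k • Sigk k) + lam • 1)⁻¹).trace
      = ((Sigk k) * ((Sigk k) + (lam / ρ k) • 1)⁻¹).trace := by
    rw [hBkeq]
    haveI : Invertible (ρ k) := invertibleOfNonzero (hρpos k).ne'
    rw [Matrix.inv_smul (A := Sigk k + (lam / ρ k) • 1) (ρ k) hdetCk, invOf_eq_inv,
      Matrix.smul_mul, Matrix.mul_smul,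
      smul_smul, mul_inv_cancel₀ (hρpos k).ne', one_smul]
  have hstep3 : ((Sigk k) * ((Sigk k) + (lam / ρ k) • 1)⁻¹).trace
      = ((Sig.submatrix (Subtype.val : ↥(obs k) → Fin d) Subtype.val)
          * ((Sig.submatrix (Subtype.val : ↥(obs k) → Fin d) Subtype.val)
              + (lam / ρ k) • 1)⁻¹).trace :=
    MatrixHelpers.trace_masked_eq hSigPSD (obs k) hc (Sigk k) (hSigk k)
  exact hstep1.trans (le_of_eq (hstep2.trans hstep3))
end

section
/- Let N be a binomial random variable with parameters n ≥ 1 and p ∈ (0,1]. Then E[𝟙{N > 0}/N] ≤ 2/(np). -/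
open MeasureTheory

/-- if `N ~ Binomial(n, p)` with `n ≥ 1` and `p ∈ (0,1]`, then
`E[𝟙{N > 0}/N] ≤ 2/(np)`. -/
theorem stmt19
    {Ω : Type*} [MeasurableSpace Ω] (μ : Measure Ω) [IsProbabilityMeasure μ]
    (n : ℕ) (hn : 1 ≤ n) (p : ℝ) (hp0 : 0 < p) (hp1 : p ≤ 1)
    (N : Ω → ℕ) (hNmeas : Measurable N)
    (hdist : ∀ k : ℕ, μ {ω | N ω = k}
      = ENNReal.ofReal ((n.choose k : ℝ) * p ^ k * (1 - p) ^ (n - k))) :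
    ∫ ω, (if N ω = 0 then (0 : ℝ) else 1 / (N ω : ℝ)) ∂μ ≤ 2 / (n * p) := by
  set q : ℝ := 1 - p with hq_def
  have hq0 : 0 ≤ q := by simp only [hq_def]; linarith
  set g : ℕ → ℝ := fun k => if k = 0 then 0 else 1 / (k : ℝ) with hg
  set b : ℕ → ℝ := fun k => (n.choose k : ℝ) * p ^ k * q ^ (n - k) with hb
  have hbnn : ∀ k, 0 ≤ b k := fun k => by
    have : (0:ℝ) ≤ (n.choose k : ℝ) := Nat.cast_nonneg _
    positivity
  have hgmeas : Measurable g := measurable_from_top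
  have hgbd : ∀ k, ‖g k‖ ≤ 1 := by
    intro k
    rcases Nat.eq_zero_or_pos k with h | h
    · simp [hg, h]
    · have hk1 : (1:ℝ) ≤ k := by exact_mod_cast h
      have hkpos : (0:ℝ) < k := by linarith
      simp only [hg]
      rw [if_neg (Nat.pos_iff_ne_zero.mp h)]
      rw [Real.norm_eq_abs, abs_of_nonneg (by positivity)]
      rw [div_le_one hkpos]; exact hk1
  set ν : Measure ℕ := μ.map N with hν
  haveI : IsProbabilityMeasure ν := Measure.isProbabilityMeasure_map hNmeas.aemeasurable
  have hint : Integrable g ν := by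
    refine Integrable.mono' (integrable_const 1) hgmeas.aestronglyMeasurable ?_
    exact ae_of_all _ hgbd
  have hνk : ∀ k, (ν {k}).toReal = b k := by
    intro k
    rw [hν, Measure.map_apply hNmeas (measurableSet_singleton k)]
    have : N ⁻¹' {k} = {ω | N ω = k} := rfl
    rw [this, hdist k, ENNReal.toReal_ofReal (hbnn k)]
  have hmap : ∫ ω, g (N ω) ∂μ = ∫ k, g k ∂ν :=
    (integral_map hNmeas.aemeasurable hgmeas.aestronglyMeasurable).symm
  have heq : ∫ ω, (if N ω = 0 then (0 : ℝ) else 1 / (N ω : ℝ)) ∂μ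
      = ∑ k ∈ Finset.range (n+1), b k * g k := by
    have h1 : ∫ ω, (if N ω = 0 then (0 : ℝ) else 1 / (N ω : ℝ)) ∂μ = ∫ ω, g (N ω) ∂μ := rfl
    rw [h1, hmap, integral_countable' hint]
    have h2 : (fun k => ν.real {k} • g k) = fun k => b k * g k := by
      funext k; rw [measureReal_def, hνk k, smul_eq_mul]
    rw [h2]
    refine tsum_eq_sum ?_
    intro k hk
    have hk' : n < k := by
      by_contra h
      exact hk (Finset.mem_range.mpr (by omega))
    have : n.choose k = 0 := Nat.choose_eq_zero_of_lt hk'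
    simp [hb, this]
  rw [heq]
  -- bound each term
  set c : ℕ → ℝ := fun k => ((n+1).choose (k+1) : ℝ) * p ^ (k+1) * q ^ (n - k) with hc
  have hterm : ∀ k, b k * g k ≤ (2 / ((n+1) * p)) * c k := by
    intro k
    have hnat : ((n:ℝ)+1) * (n.choose k : ℝ) = ((n+1).choose (k+1) : ℝ) * ((k:ℝ)+1) := by
      exact_mod_cast Nat.add_one_mul_choose_eq n k
    rcases Nat.eq_zero_or_pos k with h | h
    · subst h
      simp only [hg, hb, hc, if_pos rfl, mul_zero]
      have : (0:ℝ) ≤ ((n+1).choose 1 : ℝ) := Nat.cast_nonneg _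
      have hnp : (0:ℝ) < ((n:ℝ)+1) * p := by positivity
      positivity
    · have hkne : k ≠ 0 := Nat.pos_iff_ne_zero.mp h
      have hk1 : (1:ℝ) ≤ k := by exact_mod_cast h
      have hkpos : (0:ℝ) < k := by linarith
      -- g k = 1/k ≤ 2/(k+1)
      have hgk : g k ≤ 2 / ((k:ℝ)+1) := by
        rw [hg]; simp only [if_neg hkne]
        rw [div_le_div_iff₀ hkpos (by linarith)]
        linarith
      have hstep : b k * (2 / ((k:ℝ)+1)) = (2 / ((n+1) * p)) * c k := by
        simp only [hb, hc]
        have hn1 : ((n:ℝ)+1) ≠ 0 := by positivity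
        have hk1' : ((k:ℝ)+1) ≠ 0 := by positivity
        have hp' : p ≠ 0 := ne_of_gt hp0
        field_simp
        linear_combination (p ^ (k+1) * q ^ (n-k)) * hnat
      calc b k * g k ≤ b k * (2 / ((k:ℝ)+1)) :=
            mul_le_mul_of_nonneg_left hgk (hbnn k)
        _ = (2 / ((n+1) * p)) * c k := hstep
  have hcnn : ∀ k, 0 ≤ c k := fun k => by
    have : (0:ℝ) ≤ ((n+1).choose (k+1) : ℝ) := Nat.cast_nonneg _
    positivity
  have hsum_c : ∑ k ∈ Finset.range (n+1), c k ≤ 1 := by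
    have hbinom : ∑ j ∈ Finset.range (n+2),
        p ^ j * q ^ (n + 1 - j) * ((n+1).choose j : ℝ) = 1 := by
      have := add_pow p q (n+1)
      rw [hq_def] at this ⊢
      simp only [add_sub_cancel, one_pow] at this
      exact this.symm
    have hsplit : ∑ j ∈ Finset.range (n+2),
        p ^ j * q ^ (n + 1 - j) * ((n+1).choose j : ℝ)
        = (∑ k ∈ Finset.range (n+1),
            p ^ (k+1) * q ^ (n + 1 - (k+1)) * ((n+1).choose (k+1) : ℝ))
          + p ^ 0 * q ^ (n + 1 - 0) * ((n+1).choose 0 : ℝ) :=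
      Finset.sum_range_succ' _ _
    have hc_eq : ∀ k ∈ Finset.range (n+1),
        c k = p ^ (k+1) * q ^ (n + 1 - (k+1)) * ((n+1).choose (k+1) : ℝ) := by
      intro k hk
      have : n + 1 - (k + 1) = n - k := by omega
      rw [this, hc]; ring
    rw [Finset.sum_congr rfl hc_eq]
    have h0 : 0 ≤ p ^ 0 * q ^ (n + 1 - 0) * ((n+1).choose 0 : ℝ) := by positivity
    linarith [hbinom, hsplit.symm.trans hbinom]
  calc ∑ k ∈ Finset.range (n+1), b k * g k
      ≤ ∑ k ∈ Finset.range (n+1), (2 / ((n+1) * p)) * c k :=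
        Finset.sum_le_sum fun k _ => hterm k
    _ = (2 / ((n+1) * p)) * ∑ k ∈ Finset.range (n+1), c k := by
        rw [Finset.mul_sum]
    _ ≤ (2 / ((n+1) * p)) * 1 := by
        refine mul_le_mul_of_nonneg_left hsum_c ?_
        have : (0:ℝ) < ((n:ℝ)+1) * p := by positivity
        positivity
    _ ≤ 2 / (n * p) := by
        rw [mul_one]
        have hn1 : (1:ℝ) ≤ n := by exact_mod_cast hn
        have hnp : (0:ℝ) < n * p := by positivity
        have : (0:ℝ) < ((n:ℝ)+1) * p := by positivity
        apply div_le_div_of_nonneg_left (by norm_num) hnp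
        nlinarith
end
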